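/- arXiv:2103.12018 — 3 statements merged into one kernel-verified Lean document; each statement's English description precedes it below -/
import Mathlib

section
/- Let $N \to \infty$. Then $\sqrt{N}\, P(W_N = 0) \to \sqrt{3/(4\pi)}$; that is, $P(W_N = 0) \sim \sqrt{3/(4\pi N)}$. -/
open MeasureTheory ProbabilityTheory Filter
open Real

noncomputable section

/-- `D_N = ∑ X_i`. -/
def DN {Ω : Type*} (X : ℕ → Ω → ℝ) (N : ℕ) (ω : Ω) : ℝ := ∑ i ∈ Finset.range N, X i ω

/-- `T_N = ∑ X_i²`. -/
def TN {Ω : Type*} (X : ℕ → Ω → ℝ) (N : ℕ) (ω : Ω) : ℝ := ∑ i ∈ Finset.range N, (X i ω) ^ 2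

/-- `W_N = D_N / √T_N` if `T_N > 0`, else `0`. -/
def WN {Ω : Type*} (X : ℕ → Ω → ℝ) (N : ℕ) (ω : Ω) : ℝ :=
  if 0 < TN X N ω then DN X N ω / Real.sqrt (TN X N ω) else 0


def val3 : Fin 3 → ℤ := ![-1, 0, 1]

def SZ (N : ℕ) : Finset (Fin N → Fin 3) :=
  Finset.univ.filter (fun v => ∑ i, val3 (v i) = 0)

lemma fourier_id (N : ℕ) :
    ∫ θ in (-π)..π, (1 + 2 * Real.cos θ) ^ N = 2 * π * (SZ N).card := by
  have key : ∀ θ : ℝ, ((1 + 2 * Real.cos θ : ℝ) : ℂ) ^ N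
      = ∑ v : Fin N → Fin 3, Complex.exp (((∑ i, val3 (v i) : ℤ) : ℂ) * θ * Complex.I) := by
    intro θ
    have h1 : ((1 + 2 * Real.cos θ : ℝ) : ℂ)
        = ∑ k : Fin 3, Complex.exp ((val3 k : ℂ) * θ * Complex.I) := by
      rw [Fin.sum_univ_three]
      have e0 : ((val3 0 : ℤ) : ℂ) = -1 := by norm_num [val3]
      have e1 : ((val3 1 : ℤ) : ℂ) = 0 := by norm_num [val3]
      have e2 : ((val3 2 : ℤ) : ℂ) = 1 := by norm_num [val3]; rfl
      rw [e0, e1, e2]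
      have hplus : Complex.exp ((θ:ℂ) * Complex.I) + Complex.exp (-(θ:ℂ) * Complex.I)
          = 2 * Complex.cos θ := by
        rw [Complex.exp_mul_I, show (-(θ:ℂ)) * Complex.I = (-(θ:ℂ)) * Complex.I from rfl,
          Complex.exp_mul_I, Complex.cos_neg, Complex.sin_neg]
        ring
      push_cast
      simp only [neg_mul, one_mul, zero_mul, Complex.exp_zero] at hplus ⊢
      linear_combination -hplus
    calc ((1 + 2 * Real.cos θ : ℝ) : ℂ) ^ N
        = ∏ _i : Fin N, ∑ k : Fin 3, Complex.exp ((val3 k : ℂ) * θ * Complex.I) := by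
          rw [h1, Finset.prod_const, Finset.card_univ, Fintype.card_fin]
      _ = ∑ v ∈ Fintype.piFinset (fun _ : Fin N => (Finset.univ : Finset (Fin 3))),
            ∏ i, Complex.exp ((val3 (v i) : ℂ) * θ * Complex.I) := Finset.prod_univ_sum _ _
      _ = ∑ v : Fin N → Fin 3, Complex.exp (((∑ i, val3 (v i) : ℤ) : ℂ) * θ * Complex.I) := by
          rw [Fintype.piFinset_univ]
          refine Finset.sum_congr rfl fun v _ => ?_
          rw [← Complex.exp_sum]
          congr 1
          push_cast
          rw [Finset.sum_mul, Finset.sum_mul]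
  have int_exp : ∀ m : ℤ, (∫ θ in (-π)..π, Complex.exp ((m:ℂ) * θ * Complex.I))
      = if m = 0 then (2*π : ℂ) else 0 := by
    intro m
    by_cases hm : m = 0
    · rw [if_pos hm, hm]
      simp only [Int.cast_zero, zero_mul, Complex.exp_zero]
      rw [intervalIntegral.integral_const, Complex.real_smul]
      push_cast; ring
    · rw [if_neg hm]
      have h1 : (fun θ : ℝ => Complex.exp ((m:ℂ) * θ * Complex.I))
          = fun θ : ℝ => Complex.exp (((m:ℂ) * Complex.I) * θ) := by
        funext θ; ring_nf
      have hc : ((m:ℂ) * Complex.I) ≠ 0 := by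
        simp [Complex.I_ne_zero, hm]
      rw [h1, integral_exp_mul_complex hc]
      have hs : Complex.sin ((m:ℂ) * π) = 0 := by
        have : ((m:ℂ) * π) = ((m * π : ℝ) : ℂ) := by push_cast; ring
        rw [this, ← Complex.ofReal_sin, Real.sin_int_mul_pi]
        simp
      have hnum : Complex.exp ((m:ℂ)*Complex.I*π) - Complex.exp ((m:ℂ)*Complex.I*(-π:ℝ)) = 0 := by
        have e1 : (m:ℂ)*Complex.I*(π:ℝ) = ((m:ℂ)*π) * Complex.I := by push_cast; ring
        have e2 : (m:ℂ)*Complex.I*((-π:ℝ):ℂ) = (-((m:ℂ)*π)) * Complex.I := by push_cast; ring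
        rw [e1, e2, Complex.exp_mul_I, Complex.exp_mul_I, Complex.cos_neg, Complex.sin_neg, hs]
        ring
      rw [hnum, zero_div]
  have h2 : (∫ θ in (-π)..π, ((1 + 2 * Real.cos θ : ℝ) : ℂ) ^ N) = ((2 * π * (SZ N).card : ℝ) : ℂ) := by
    rw [intervalIntegral.integral_congr (g := fun θ =>
      ∑ v : Fin N → Fin 3, Complex.exp (((∑ i, val3 (v i) : ℤ) : ℂ) * θ * Complex.I))
      (fun θ _ => key θ)]
    rw [intervalIntegral.integral_finset_sum]
    · have : ∀ v : Fin N → Fin 3, v ∈ (Finset.univ : Finset (Fin N → Fin 3)) →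
          (∫ θ in (-π)..π, Complex.exp (((∑ i, val3 (v i) : ℤ) : ℂ) * θ * Complex.I))
          = if (∑ i, val3 (v i)) = 0 then (2*π:ℂ) else 0 := fun v _ => int_exp _
      rw [Finset.sum_congr rfl this, ← Finset.sum_filter]
      rw [show Finset.univ.filter (fun v : Fin N → Fin 3 => (∑ i, val3 (v i)) = 0) = SZ N from rfl]
      rw [Finset.sum_const, nsmul_eq_mul]
      push_cast; ring
    · intro v _
      apply Continuous.intervalIntegrable
      exact Complex.continuous_exp.comp (by continuity)
  have h3 : (∫ θ in (-π)..π, (((1 + 2 * Real.cos θ) ^ N : ℝ) : ℂ))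
      = ((∫ θ in (-π)..π, (1 + 2 * Real.cos θ) ^ N : ℝ) : ℂ) :=
    RCLike.intervalIntegral_ofReal
  have h4 : (∫ θ in (-π)..π, (((1 + 2 * Real.cos θ) ^ N : ℝ) : ℂ))
      = ∫ θ in (-π)..π, ((1 + 2 * Real.cos θ : ℝ) : ℂ) ^ N :=
    intervalIntegral.integral_congr (fun θ _ => by push_cast; ring)
  exact_mod_cast (h3.symm.trans h4).trans h2


lemma jordan {θ : ℝ} (h : |θ| ≤ π) : 2 * θ^2 / π^2 ≤ 1 - Real.cos θ := by
  have hπ : (0:ℝ) < π := Real.pi_pos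
  have hs : Real.sin (θ/2) ^ 2 = (1 - Real.cos θ)/2 := by
    rw [Real.sin_sq_eq_half_sub, show 2*(θ/2) = θ by ring]; ring
  have habs : 2/π * |θ/2| ≤ |Real.sin (θ/2)| := by
    apply Real.mul_abs_le_abs_sin
    rw [abs_div, abs_two]
    linarith [abs_nonneg θ]
  have h1 : (2/π * |θ/2|)^2 ≤ Real.sin (θ/2)^2 := by
    have := pow_le_pow_left₀ (by positivity) habs 2
    simpa [sq_abs] using this
  have h2 : (2/π * |θ/2|)^2 = θ^2/π^2 := by
    rw [mul_pow, div_pow, abs_div, abs_two, div_pow, sq_abs]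
    field_simp
  rw [h2] at h1
  rw [hs] at h1
  rw [div_le_div_iff₀ (by positivity) (by norm_num)] at h1
  calc 2 * θ^2 / π^2 = (θ^2 * 2) / π^2 := by ring
  _ ≤ _ := by rw [div_le_iff₀ (by positivity)]; linarith

lemma dom_bound {θ : ℝ} (h : |θ| ≤ π) :
    |(1 + 2*Real.cos θ)/3| ≤ Real.exp (-(1/10) * θ^2) := by
  have hπ : (0:ℝ) < π := Real.pi_pos
  have hπ2 : π^2 < 10 := by nlinarith [Real.pi_lt_d2]
  have hθ2 : θ^2 ≤ π^2 := by
    rcases abs_le.1 h with ⟨h1, h2⟩; nlinarith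
  rcases le_or_gt 0 (1 + 2*Real.cos θ) with hpos | hneg
  · rw [abs_of_nonneg (by positivity)]
    have hj := jordan h
    have h5 : 1 - (2/3) * (2*θ^2/π^2) ≤ Real.exp (-((2/3) * (2*θ^2/π^2))) := by
      have := Real.add_one_le_exp (-((2/3) * (2*θ^2/π^2))); linarith
    have h6 : Real.exp (-((2/3) * (2*θ^2/π^2))) ≤ Real.exp (-(1/10) * θ^2) := by
      apply Real.exp_le_exp.2
      have h9 : (1:ℝ)/10 * θ^2 ≤ (2/3) * (2*θ^2/π^2) := by
        rw [show (2:ℝ)/3 * (2*θ^2/π^2) = 4*θ^2/(3*π^2) by ring, le_div_iff₀ (by positivity)]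
        nlinarith [sq_nonneg θ]
      linarith
    calc (1 + 2*Real.cos θ)/3 = 1 - (2/3)*(1 - Real.cos θ) := by ring
    _ ≤ 1 - (2/3) * (2*θ^2/π^2) := by nlinarith
    _ ≤ Real.exp (-((2/3) * (2*θ^2/π^2))) := h5
    _ ≤ Real.exp (-(1/10) * θ^2) := h6
  · rw [abs_of_neg (by linarith : (1+2*Real.cos θ)/3 < 0)]
    have hc : -1 ≤ Real.cos θ := Real.neg_one_le_cos θ
    have h7 : Real.exp (-1) ≤ Real.exp (-(1/10)*θ^2) := by
      apply Real.exp_le_exp.2; nlinarith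
    have h8 : (1:ℝ)/3 ≤ Real.exp (-1) := by
      rw [Real.exp_neg, one_div]
      exact inv_anti₀ (Real.exp_pos 1) (by linarith [Real.exp_one_lt_d9])
    linarith

lemma tendsto_sqrt_nat : Tendsto (fun N : ℕ => Real.sqrt N) atTop atTop := by
  rw [tendsto_atTop]
  intro b
  filter_upwards [eventually_ge_atTop (Nat.ceil ((max b 0)^2))] with N hN
  have h1 : ((max b 0)^2 : ℝ) ≤ N := le_trans (Nat.le_ceil _) (by exact_mod_cast hN)
  calc b ≤ max b 0 := le_max_left _ _
  _ = Real.sqrt ((max b 0)^2) := (Real.sqrt_sq (le_max_right _ _)).symm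
  _ ≤ Real.sqrt N := Real.sqrt_le_sqrt h1

lemma tendsto_sin_div : Tendsto (fun y : ℝ => Real.sin y / y) (nhdsWithin 0 {0}ᶜ) (nhds 1) := by
  have hd : HasDerivAt Real.sin 1 0 := by simpa using Real.hasDerivAt_sin 0
  have h := hasDerivAt_iff_tendsto_slope.1 hd
  apply h.congr'
  filter_upwards [self_mem_nhdsWithin] with y hy
  rw [slope_def_field, Real.sin_zero, sub_zero, sub_zero]

lemma tendsto_one_sub_cos_div_sq :
    Tendsto (fun x : ℝ => (1 - Real.cos x) / x^2) (nhdsWithin 0 {0}ᶜ) (nhds (1/2)) := by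
  have hhalf : Tendsto (fun x : ℝ => x/2) (nhdsWithin 0 {0}ᶜ) (nhdsWithin 0 {0}ᶜ) := by
    apply tendsto_nhdsWithin_of_tendsto_nhds_of_eventually_within
    · have := ((continuous_id.div_const (2:ℝ)).tendsto 0).mono_left (nhdsWithin_le_nhds (s := {(0:ℝ)}ᶜ))
      simpa using this
    · filter_upwards [self_mem_nhdsWithin] with y hy
      simp only [Set.mem_compl_iff, Set.mem_singleton_iff] at hy ⊢
      intro hc; exact hy (by linarith)
  have h1 : Tendsto (fun x : ℝ => (Real.sin (x/2) / (x/2))^2 / 2) (nhdsWithin 0 {0}ᶜ)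
      (nhds (1/2)) := by
    have := ((tendsto_sin_div.comp hhalf).pow 2).div_const 2
    simpa using this
  apply h1.congr'
  filter_upwards [self_mem_nhdsWithin] with x hx
  have hx0 : x ≠ 0 := by simpa using hx
  have hs : Real.sin (x/2) ^ 2 = (1 - Real.cos x)/2 := by
    rw [Real.sin_sq_eq_half_sub, show 2*(x/2) = x by ring]; ring
  rw [div_pow, hs]
  field_simp

lemma tendsto_log_one_add_div : Tendsto (fun x : ℝ => Real.log (1 + x) / x)
    (nhdsWithin 0 {0}ᶜ) (nhds 1) := by
  have hd : HasDerivAt (fun x : ℝ => Real.log (1 + x)) 1 0 := by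
    have h1 : HasDerivAt (fun x : ℝ => 1 + x) 1 0 := by
      simpa using (hasDerivAt_id (0:ℝ)).const_add 1
    have h2 := (Real.hasDerivAt_log (by norm_num : (1:ℝ) + 0 ≠ 0)).comp 0 h1
    simpa [Function.comp_def] using h2
  have h := hasDerivAt_iff_tendsto_slope.1 hd
  apply h.congr'
  filter_upwards [self_mem_nhdsWithin] with y hy
  rw [slope_def_field]
  simp [Real.log_one]

lemma pointwise_lim (t : ℝ) :
    Tendsto (fun N : ℕ => ((1 + 2 * Real.cos (t / Real.sqrt N))/3) ^ N) atTop
      (nhds (Real.exp (-(1/3) * t^2))) := by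
  rcases eq_or_ne t 0 with rfl | ht
  · have h0 : (fun N : ℕ => ((1 + 2 * Real.cos (0 / Real.sqrt N))/3) ^ N) = fun _ => 1 := by
      funext N; norm_num
    rw [h0, show (-(1/3) * (0:ℝ)^2) = 0 by norm_num, Real.exp_zero]
    exact tendsto_const_nhds
  set s : ℕ → ℝ := fun N => t / Real.sqrt N with hsdef
  have hs0 : Tendsto s atTop (nhds 0) :=
    tendsto_const_nhds.div_atTop tendsto_sqrt_nat
  have hsne : ∀ᶠ N : ℕ in atTop, s N ≠ 0 := by
    filter_upwards [eventually_ge_atTop 1] with N hN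
    have : (0:ℝ) < Real.sqrt N := Real.sqrt_pos.2 (by exact_mod_cast hN)
    exact div_ne_zero ht this.ne'
  have hs : Tendsto s atTop (nhdsWithin 0 {0}ᶜ) :=
    tendsto_nhdsWithin_of_tendsto_nhds_of_eventually_within _ hs0
      (by filter_upwards [hsne] with N h; simpa using h)
  set u : ℕ → ℝ := fun N => -(2/3) * (1 - Real.cos (s N)) with hu
  have hsmall : ∀ᶠ N : ℕ in atTop, |s N| < π := by
    have : Tendsto (fun N => |s N|) atTop (nhds 0) := by simpa using hs0.abs
    exact this.eventually_lt_const Real.pi_pos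
  have hune : ∀ᶠ N : ℕ in atTop, u N ≠ 0 := by
    filter_upwards [hsmall, hsne] with N h1 h2
    have hj := jordan (le_of_lt h1)
    have : 0 < 2 * (s N)^2 / π^2 := by positivity
    rw [hu]
    simp only [ne_eq, neg_mul, neg_eq_zero, mul_eq_zero]
    push_neg
    constructor
    · norm_num
    · linarith
  have hu0 : Tendsto u atTop (nhds 0) := by
    have hc : Tendsto (fun N => 1 - Real.cos (s N)) atTop (nhds 0) := by
      have := (Real.continuous_cos.tendsto 0).comp hs0
      have h2 := (tendsto_const_nhds (x := (1:ℝ)) (f := atTop (α := ℕ))).sub this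
      simpa using h2
    have h3 := hc.const_mul (-(2/3) : ℝ)
    rw [hu]
    simpa using h3
  have huW : Tendsto u atTop (nhdsWithin 0 {0}ᶜ) :=
    tendsto_nhdsWithin_of_tendsto_nhds_of_eventually_within _ hu0
      (by filter_upwards [hune] with N h; simpa using h)
  have hNu : Tendsto (fun N : ℕ => (N:ℝ) * u N) atTop (nhds (-(1/3) * t^2)) := by
    have hmain : Tendsto (fun N : ℕ => (-(2/3) * t^2) * ((1 - Real.cos (s N))/(s N)^2)) atTop
        (nhds (-(1/3) * t^2)) := by
      have := (tendsto_one_sub_cos_div_sq.comp hs).const_mul (-(2/3) * t^2)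
      have heq : (-(2/3) * t^2) * (1/2) = -(1/3) * t^2 := by ring
      rw [← heq]
      exact this
    apply hmain.congr'
    filter_upwards [eventually_ge_atTop 1, hsne] with N hN hne
    have hNpos : (0:ℝ) < N := by exact_mod_cast hN
    have hsq : (s N)^2 = t^2 / N := by
      rw [hsdef]
      rw [div_pow, Real.sq_sqrt (le_of_lt hNpos)]
    rw [hu]
    rw [hsq]
    have ht2 : t^2 ≠ 0 := pow_ne_zero 2 ht
    field_simp
  have hNlog : Tendsto (fun N : ℕ => (N:ℝ) * Real.log (1 + u N)) atTop
      (nhds (-(1/3) * t^2)) := by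
    have hprod := hNu.mul (tendsto_log_one_add_div.comp huW)
    rw [mul_one] at hprod
    apply hprod.congr'
    filter_upwards [hune] with N hne
    have : Real.log (1 + u N) / u N * u N = Real.log (1 + u N) := by
      field_simp
    calc (N:ℝ) * u N * (Real.log (1 + u N) / u N)
        = (N:ℝ) * (Real.log (1 + u N) / u N * u N) := by ring
    _ = (N:ℝ) * Real.log (1 + u N) := by rw [this]
  have hupos : ∀ᶠ N : ℕ in atTop, 0 < 1 + u N := by
    have : Tendsto (fun N => 1 + u N) atTop (nhds 1) := by
      simpa using (tendsto_const_nhds (x := (1:ℝ)) (f := atTop (α := ℕ))).add hu0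
    exact this.eventually_const_lt (by norm_num)
  have hexp := (Real.continuous_exp.tendsto _).comp hNlog
  apply hexp.congr'
  filter_upwards [hupos] with N hpos
  have h1 : (1 + 2 * Real.cos (s N))/3 = 1 + u N := by rw [hu]; ring
  simp only [Function.comp_apply]
  rw [Real.exp_nat_mul, Real.exp_log hpos, ← h1]

lemma laplace : Tendsto (fun N : ℕ => Real.sqrt N * (((SZ N).card : ℝ) / 3 ^ N)) atTop
    (nhds (Real.sqrt (3 / (4 * π)))) := by
  have hπ : (0:ℝ) < π := Real.pi_pos
  set g : ℝ → ℝ := fun θ => (1 + 2 * Real.cos θ)/3 with hg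
  set F : ℕ → ℝ → ℝ := fun N t =>
    (Set.Ioc (-(π * Real.sqrt N)) (π * Real.sqrt N)).indicator
      (fun t => g (t / Real.sqrt N) ^ N) t with hF
  have hDCT : Tendsto (fun N => ∫ t : ℝ, F N t) atTop
      (nhds (∫ t : ℝ, Real.exp (-(1/3) * t^2))) := by
    apply tendsto_integral_of_dominated_convergence (bound := fun t => Real.exp (-(1/10) * t^2))
    · intro n
      apply AEStronglyMeasurable.indicator _ measurableSet_Ioc
      apply Continuous.aestronglyMeasurable
      fun_prop
    · exact integrable_exp_neg_mul_sq (by norm_num)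
    · intro n
      apply Filter.Eventually.of_forall
      intro t
      rcases Nat.eq_zero_or_pos n with rfl | hn
      · have : F 0 t = 0 := by
          rw [hF]
          simp
        rw [this]
        simp [Real.exp_nonneg]
      · by_cases htmem : t ∈ Set.Ioc (-(π * Real.sqrt n)) (π * Real.sqrt n)
        · rw [hF]
          simp only []
          rw [Set.indicator_of_mem htmem]
          have hnR : (0:ℝ) < n := by exact_mod_cast hn
          have hsn : (0:ℝ) < Real.sqrt n := Real.sqrt_pos.2 hnR
          have habs : |t / Real.sqrt n| ≤ π := by
            rw [abs_div, abs_of_nonneg hsn.le, div_le_iff₀ hsn]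
            rcases htmem with ⟨h1, h2⟩
            rw [abs_le]
            constructor <;> linarith
          have hb := dom_bound habs
          have h2 : ‖g (t / Real.sqrt n) ^ n‖ = |g (t / Real.sqrt n)| ^ n := by
            rw [Real.norm_eq_abs, abs_pow]
          rw [h2]
          calc |g (t / Real.sqrt n)| ^ n
              ≤ Real.exp (-(1/10) * (t / Real.sqrt n)^2) ^ n :=
                pow_le_pow_left₀ (abs_nonneg _) hb n
            _ = Real.exp (-(1/10) * t^2) := by
                rw [← Real.exp_nat_mul]
                congr 1
                rw [div_pow, Real.sq_sqrt hnR.le]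
                field_simp
        · rw [hF]
          simp only []
          rw [Set.indicator_of_notMem htmem]
          simp [Real.exp_nonneg]
    · apply Filter.Eventually.of_forall
      intro t
      have hev : ∀ᶠ N : ℕ in atTop, F N t = g (t / Real.sqrt N) ^ N := by
        have hto : Tendsto (fun N : ℕ => π * Real.sqrt N) atTop atTop :=
          tendsto_sqrt_nat.const_mul_atTop hπ
        filter_upwards [hto.eventually_ge_atTop (|t| + 1)] with N hN
        rw [hF]
        simp only []
        rw [Set.indicator_of_mem]
        constructor
        · have := neg_abs_le t
          linarith
        · linarith [le_abs_self t]
      exact ((pointwise_lim t).congr' (hev.mono fun N h => h.symm))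
  have hchg : ∀ N : ℕ, 1 ≤ N → ∫ t : ℝ, F N t = Real.sqrt N * ∫ θ in (-π)..π, g θ ^ N := by
    intro N hN
    have hNR : (0:ℝ) < N := by exact_mod_cast hN
    have hsN : (0:ℝ) < Real.sqrt N := Real.sqrt_pos.2 hNR
    rw [hF]
    simp only []
    rw [MeasureTheory.integral_indicator measurableSet_Ioc]
    rw [← intervalIntegral.integral_of_le (by nlinarith : -(π * Real.sqrt N) ≤ π * Real.sqrt N)]
    rw [intervalIntegral.integral_comp_div (f := fun θ => g θ ^ N) hsN.ne']
    rw [show -(π * Real.sqrt N) / Real.sqrt N = -π by field_simp,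
      show (π * Real.sqrt N) / Real.sqrt N = π by field_simp]
    rw [smul_eq_mul]
  have hgN : ∀ N : ℕ, ∫ θ in (-π)..π, g θ ^ N = 2*π*((SZ N).card : ℝ) / 3^N := by
    intro N
    have h1 : ∀ θ : ℝ, g θ ^ N = (1 + 2*Real.cos θ)^N / 3^N := by
      intro θ; rw [hg]; rw [div_pow]
    rw [intervalIntegral.integral_congr (g := fun θ => (1 + 2*Real.cos θ)^N / 3^N)
      (fun θ _ => h1 θ)]
    rw [intervalIntegral.integral_div, fourier_id]
  have hgauss : (∫ t : ℝ, Real.exp (-(1/3) * t^2)) = Real.sqrt (3*π) := by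
    rw [integral_gaussian]
    rw [show π/(1/3:ℝ) = 3*π by ring]
  have hfinal : Real.sqrt (3 / (4*π)) = Real.sqrt (3*π) / (2*π) := by
    rw [show (3:ℝ)/(4*π) = (3*π)/((2*π)^2) by field_simp; ring]
    rw [Real.sqrt_div (by positivity) _, Real.sqrt_sq (by positivity)]
  have heq : ∀ᶠ N : ℕ in atTop,
      (∫ t : ℝ, F N t) / (2*π) = Real.sqrt N * (((SZ N).card : ℝ) / 3 ^ N) := by
    filter_upwards [eventually_ge_atTop 1] with N hN
    rw [hchg N hN, hgN N]
    field_simp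
  have hlim := hDCT.div_const (2*π)
  rw [hgauss] at hlim
  rw [hfinal]
  exact hlim.congr' heq

lemma WN_eq_zero_iff {Ω : Type*} (X : ℕ → Ω → ℝ) (N : ℕ) (ω : Ω) :
    WN X N ω = 0 ↔ DN X N ω = 0 := by
  unfold WN
  by_cases h : 0 < TN X N ω
  · rw [if_pos h]
    constructor
    · intro h0
      rcases div_eq_zero_iff.1 h0 with h1 | h1
      · exact h1
      · exact absurd h1 (Real.sqrt_ne_zero'.2 h)
    · intro h0; rw [h0, zero_div]
  · rw [if_neg h]
    have hT : TN X N ω = 0 := le_antisymm (not_lt.1 h) (Finset.sum_nonneg fun i _ => sq_nonneg _)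
    have hz : ∀ i ∈ Finset.range N, X i ω = 0 := by
      intro i hi
      have := (Finset.sum_eq_zero_iff_of_nonneg (fun j _ => sq_nonneg (X j ω))).1 hT i hi
      exact pow_eq_zero_iff (two_ne_zero) |>.1 this
    exact iff_of_true rfl (Finset.sum_eq_zero hz)

lemma measure_DN {Ω : Type*} [MeasurableSpace Ω] (μ : Measure Ω) [IsProbabilityMeasure μ]
    (X : ℕ → Ω → ℝ) (hmeas : ∀ i, Measurable (X i))
    (hindep : iIndepFun X μ)
    (hdist : ∀ i, μ {ω | X i ω = -1} = 1/3 ∧ μ {ω | X i ω = 0} = 1/3 ∧ μ {ω | X i ω = 1} = 1/3)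
    (N : ℕ) :
    μ {ω | DN X N ω = 0} = (SZ N).card * ((1:ENNReal)/3)^N := by
  classical
  set A : ℕ → Fin 3 → Set Ω := fun i k => X i ⁻¹' {((val3 k : ℤ) : ℝ)} with hA
  have hAmeas : ∀ (i : ℕ) (k : Fin 3), MeasurableSet (A i k) :=
    fun i k => (hmeas i) (measurableSet_singleton _)
  have hA3 : ∀ (i : ℕ) (k : Fin 3), μ (A i k) = 1/3 := by
    intro i k
    obtain ⟨h1, h2, h3⟩ := hdist i
    have hAk : A i k = {ω | X i ω = ((val3 k : ℤ) : ℝ)} := by ext ω; simp [hA]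
    rw [hAk]
    match k with
    | 0 => simpa [val3] using h1
    | 1 => simpa [val3] using h2
    | 2 => simpa [val3] using h3
  set B : (Fin N → Fin 3) → Set Ω := fun v => ⋂ i : Fin N, A i.1 (v i) with hB
  have hBmeas : ∀ v, MeasurableSet (B v) := fun v => MeasurableSet.iInter fun i => hAmeas _ _
  have hμB : ∀ v : Fin N → Fin 3, μ (B v) = ((1:ENNReal)/3)^N := by
    intro v
    set sets : ℕ → Set ℝ :=
      fun i => if h : i < N then {((val3 (v ⟨i, h⟩) : ℤ) : ℝ)} else Set.univ with hsets
    have hindep' := hindep.measure_inter_preimage_eq_mul (Finset.range N) (sets := sets)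
      (fun i _ => by
        by_cases h : i < N
        · simp only [hsets, dif_pos h]; exact measurableSet_singleton _
        · simp only [hsets, dif_neg h]; exact MeasurableSet.univ)
    have hleft : (⋂ i ∈ Finset.range N, X i ⁻¹' sets i) = B v := by
      rw [hB]
      ext ω
      simp only [Set.mem_iInter, Finset.mem_range, Set.mem_preimage, hA]
      constructor
      · intro h i
        have := h i.1 i.2
        rw [hsets] at this
        simp only [dif_pos i.2] at this
        simpa using this
      · intro h i hi
        rw [hsets]
        simp only [dif_pos hi]
        simpa using h ⟨i, hi⟩
    have hright : ∀ i ∈ Finset.range N, μ (X i ⁻¹' sets i) = (1:ENNReal)/3 := by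
      intro i hi
      rw [Finset.mem_range] at hi
      rw [hsets]
      simp only [dif_pos hi]
      exact hA3 i (v ⟨i, hi⟩)
    rw [hleft] at hindep'
    rw [hindep', Finset.prod_congr rfl hright, Finset.prod_const, Finset.card_range]
  have hdisj : ∀ v w : Fin N → Fin 3, v ≠ w → Disjoint (B v) (B w) := by
    intro v w hvw
    obtain ⟨i, hi⟩ : ∃ i, v i ≠ w i := by
      by_contra hcon; push_neg at hcon; exact hvw (funext hcon)
    apply Set.disjoint_left.2
    intro ω hωv hωw
    have h1 : X i.1 ω = ((val3 (v i) : ℤ) : ℝ) := by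
      have := Set.mem_iInter.1 hωv i; simpa [hA] using this
    have h2 : X i.1 ω = ((val3 (w i) : ℤ) : ℝ) := by
      have := Set.mem_iInter.1 hωw i; simpa [hA] using this
    have heq : val3 (v i) = val3 (w i) := by exact_mod_cast h1.symm.trans h2
    have hinj : ∀ a b : Fin 3, val3 a = val3 b → a = b := by decide
    exact hi (hinj _ _ heq)
  set Good : Set Ω := ⋂ i ∈ Finset.range N, {ω | X i ω = -1 ∨ X i ω = 0 ∨ X i ω = 1} with hGood
  have hGoodc : μ Goodᶜ = 0 := by
    have hnull : ∀ i : ℕ, μ {ω | ¬(X i ω = -1 ∨ X i ω = 0 ∨ X i ω = 1)} = 0 := by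
      intro i
      obtain ⟨h1, h2, h3⟩ := hdist i
      have hm1 : MeasurableSet {ω | X i ω = -1} := (hmeas i) (measurableSet_singleton (-1))
      have hm2 : MeasurableSet {ω | X i ω = 0} := (hmeas i) (measurableSet_singleton 0)
      have hm3 : MeasurableSet {ω | X i ω = 1} := (hmeas i) (measurableSet_singleton 1)
      have hd23 : Disjoint {ω | X i ω = 0} {ω | X i ω = 1} := by
        apply Set.disjoint_left.2
        intro ω hω1 hω2
        simp only [Set.mem_setOf_eq] at hω1 hω2
        rw [hω1] at hω2; norm_num at hω2
      have hd123 : Disjoint {ω | X i ω = -1} ({ω | X i ω = 0} ∪ {ω | X i ω = 1}) := by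
        apply Set.disjoint_left.2
        intro ω hω1 hω2
        simp only [Set.mem_setOf_eq] at hω1
        rcases hω2 with hω2 | hω2 <;> simp only [Set.mem_setOf_eq] at hω2 <;>
          rw [hω1] at hω2 <;> norm_num at hω2
      have hunion : μ ({ω | X i ω = -1} ∪ ({ω | X i ω = 0} ∪ {ω | X i ω = 1})) = 1 := by
        rw [measure_union hd123 (hm2.union hm3), measure_union hd23 hm3, h1, h2, h3]
        rw [show (1:ENNReal)/3 + (1/3 + 1/3) = 3 * (1/3) by ring]
        rw [show (3:ENNReal) * (1/3) = 3 * 3⁻¹ by rw [one_div]]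
        exact ENNReal.mul_inv_cancel (by norm_num) (by norm_num)
      have hcompl := measure_compl (hm1.union (hm2.union hm3)) (measure_ne_top μ _)
      rw [hunion, measure_univ, tsub_self] at hcompl
      have hsetc : {ω | ¬(X i ω = -1 ∨ X i ω = 0 ∨ X i ω = 1)}
          = ({ω | X i ω = -1} ∪ ({ω | X i ω = 0} ∪ {ω | X i ω = 1}))ᶜ := by
        ext ω; simp [not_or]
      rw [hsetc]
      exact hcompl
    have hsub : Goodᶜ ⊆ ⋃ i ∈ Finset.range N, {ω | ¬(X i ω = -1 ∨ X i ω = 0 ∨ X i ω = 1)} := by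
      intro ω hω
      rw [hGood] at hω
      simp only [Set.compl_iInter, Set.mem_iUnion, Set.mem_compl_iff] at hω
      obtain ⟨i, hi, hωi⟩ := hω
      exact Set.mem_biUnion hi hωi
    refine measure_mono_null hsub ?_
    exact (measure_biUnion_null_iff (Finset.range N).countable_toSet).2 fun i _ => hnull i
  have hDNval : ∀ (ω : Ω) (v : Fin N → Fin 3), (∀ i : Fin N, X i.1 ω = ((val3 (v i) : ℤ) : ℝ)) →
      DN X N ω = ((∑ i : Fin N, val3 (v i) : ℤ) : ℝ) := by
    intro ω v hv
    rw [DN, Finset.sum_range fun i => X i ω]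
    push_cast
    exact Finset.sum_congr rfl fun i _ => hv i
  have hcore : ∀ ω ∈ Good, (DN X N ω = 0 ↔ ω ∈ ⋃ v ∈ SZ N, B v) := by
    intro ω hω
    have hval : ∀ i : Fin N, ∃ k : Fin 3, X i.1 ω = ((val3 k : ℤ) : ℝ) := by
      intro i
      have h := (Set.mem_iInter₂.1 hω) i.1 (Finset.mem_range.2 i.2)
      rcases h with h | h | h
      · exact ⟨0, by simpa [val3] using h⟩
      · exact ⟨1, by simpa [val3] using h⟩
      · exact ⟨2, by simpa [val3] using h⟩
    choose vv hvv using hval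
    constructor
    · intro h0
      have hsum : (∑ i : Fin N, val3 (vv i) : ℤ) = 0 := by
        have : ((∑ i : Fin N, val3 (vv i) : ℤ) : ℝ) = 0 := by
          rw [← hDNval ω vv hvv]; exact h0
        exact_mod_cast this
      refine Set.mem_biUnion (Finset.mem_filter.2 ⟨Finset.mem_univ _, hsum⟩) ?_
      exact Set.mem_iInter.2 fun i => by simp [hA, hvv i]
    · intro hmem
      obtain ⟨v, hv, hωv⟩ := Set.mem_iUnion₂.1 hmem
      have hvval : ∀ i : Fin N, X i.1 ω = ((val3 (v i) : ℤ) : ℝ) := fun i => by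
        have := Set.mem_iInter.1 hωv i; simpa [hA] using this
      rw [hDNval ω v hvval, (Finset.mem_filter.1 hv).2]
      norm_num
  have hset1 : μ {ω | DN X N ω = 0} = μ (⋃ v ∈ SZ N, B v) := by
    rw [← measure_inter_conull hGoodc, ← measure_inter_conull (s := ⋃ v ∈ SZ N, B v) hGoodc]
    congr 1
    ext ω
    simp only [Set.mem_inter_iff, Set.mem_setOf_eq]
    constructor
    · rintro ⟨h1, h2⟩; exact ⟨(hcore ω h2).1 h1, h2⟩
    · rintro ⟨h1, h2⟩; exact ⟨(hcore ω h2).2 h1, h2⟩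
  rw [hset1, measure_biUnion_finset ?_ (fun v _ => hBmeas v)]
  · rw [Finset.sum_congr rfl (fun v _ => hμB v), Finset.sum_const, nsmul_eq_mul]
  · intro v hv w hw hvw
    exact hdisj v w hvw


theorem statement0 {Ω : Type*} [MeasurableSpace Ω] (μ : Measure Ω) [IsProbabilityMeasure μ]
    (X : ℕ → Ω → ℝ) (hmeas : ∀ i, Measurable (X i))
    (hindep : iIndepFun X μ)
    (hdist : ∀ i, μ {ω | X i ω = -1} = 1/3 ∧ μ {ω | X i ω = 0} = 1/3 ∧ μ {ω | X i ω = 1} = 1/3) :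
    Tendsto (fun N : ℕ ↦ Real.sqrt N * (μ {ω | WN X N ω = 0}).toReal) atTop
      (nhds (Real.sqrt (3 / (4 * Real.pi)))) := by
  have hμ : ∀ N : ℕ, (μ {ω | WN X N ω = 0}).toReal = ((SZ N).card : ℝ) / 3 ^ N := by
    intro N
    have hset : {ω | WN X N ω = 0} = {ω | DN X N ω = 0} := by
      ext ω; exact WN_eq_zero_iff X N ω
    rw [hset, measure_DN μ X hmeas hindep hdist N]
    rw [ENNReal.toReal_mul, ENNReal.toReal_pow, ENNReal.toReal_div]
    simp only [ENNReal.toReal_natCast, ENNReal.toReal_one, ENNReal.toReal_ofNat]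
    rw [div_pow, one_pow]
    ring
  have hfun : (fun N : ℕ => Real.sqrt N * (μ {ω | WN X N ω = 0}).toReal)
      = fun N : ℕ => Real.sqrt N * (((SZ N).card : ℝ) / 3 ^ N) :=
    funext fun N => by rw [hμ N]
  rw [hfun]
  exact laplace
end
end

section
/- There exists a constant $C > 0$ such that for all $N \ge 1$, $\left|\sum_{n=0}^{N} \frac{3}{\sqrt{\pi N}} e^{-9(n-N/3)^2/N} - 1\right| \le C/N$; in particular this Riemann sum of the normal $N(N/3, N/18)$ density over the integers $0,1,\dots,N$ tends to $1$ as $N \to \infty$. -/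
open MeasureTheory ProbabilityTheory Filter

noncomputable section

open Real


/-- Summability of a shifted Gaussian over ℕ. -/
lemma summable_gauss_nat (b μ : ℝ) (hb : 0 < b) :
    Summable (fun n : ℕ => Real.exp (-(b * ((n : ℝ) - μ) ^ 2))) := by
  rw [← summable_nat_add_iff (⌈μ⌉₊ + 1)]
  refine Summable.of_nonneg_of_le (g := fun n : ℕ => Real.exp (-(b * (((n + (⌈μ⌉₊ + 1) : ℕ)) - μ) ^ 2)))
    (f := fun n : ℕ => Real.exp (-b) ^ n) (fun n => (Real.exp_pos _).le) ?_ ?_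
  · intro n
    have h1 : μ ≤ (⌈μ⌉₊ : ℝ) := Nat.le_ceil μ
    have hx : (n : ℝ) + 1 ≤ ((n + (⌈μ⌉₊ + 1) : ℕ) : ℝ) - μ := by push_cast; linarith
    have hx0 : (0:ℝ) ≤ (n : ℝ) + 1 := by positivity
    have hsq : (n : ℝ) * 1 ≤ (((n + (⌈μ⌉₊ + 1) : ℕ) : ℝ) - μ) ^ 2 := by nlinarith
    show Real.exp _ ≤ Real.exp (-b) ^ n
    rw [← Real.exp_nat_mul]
    apply Real.exp_le_exp.2
    have := mul_le_mul_of_nonneg_left hsq hb.le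
    nlinarith
  · exact summable_geometric_of_lt_one (Real.exp_pos _).le
      (Real.exp_lt_one_iff.2 (by linarith))

/-- Summability of a shifted Gaussian over ℤ. -/
lemma summable_gauss_int (b μ : ℝ) (hb : 0 < b) :
    Summable (fun n : ℤ => Real.exp (-(b * ((n : ℝ) - μ) ^ 2))) := by
  apply Summable.of_nat_of_neg
  · exact_mod_cast summable_gauss_nat b μ hb
  · have := summable_gauss_nat b (-μ) hb
    apply this.congr
    intro n
    push_cast
    ring_nf


/-- Bound a tail of a nonneg summable function outside a finset by a dominator. -/
lemma tsum_sub_sum_le {g D : ℤ → ℝ} (s : Finset ℤ) (hg : Summable g) (hD : Summable D)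
    (hg0 : ∀ n, 0 ≤ g n) (hD0 : ∀ n, 0 ≤ D n) (hle : ∀ n ∉ s, g n ≤ D n) :
    ∑' n, g n - ∑ n ∈ s, g n ≤ ∑' n, D n := by
  have h1 := Summable.sum_add_tsum_compl (s := s) hg
  have h2 : ∑' n, g n - ∑ n ∈ s, g n = ∑' (x : ↑((s : Set ℤ)ᶜ)), g x := by linarith
  rw [h2]
  calc ∑' (x : ↑((s : Set ℤ)ᶜ)), g x ≤ ∑' (x : ↑((s : Set ℤ)ᶜ)), D x := by
        apply Summable.tsum_le_tsum _ (hg.subtype _) (hD.subtype _)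
        intro x
        exact hle x.1 (fun h => x.2 (Finset.mem_coe.mpr h))
    _ ≤ ∑' n, D n := Summable.tsum_subtype_le D _ hD0 hD

lemma tsum_sub_sum_nonneg {g : ℤ → ℝ} (s : Finset ℤ) (hg : Summable g)
    (hg0 : ∀ n, 0 ≤ g n) : 0 ≤ ∑' n, g n - ∑ n ∈ s, g n := by
  have h1 := Summable.sum_add_tsum_compl (s := s) hg
  have h2 : ∑' n, g n - ∑ n ∈ s, g n = ∑' (x : ↑((s : Set ℤ)ᶜ)), g x := by linarith
  rw [h2]
  exact tsum_nonneg fun x => hg0 x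

/-- Norm bound for a complex tsum minus its `0`-term. -/
lemma norm_tsum_sub_single {f : ℤ → ℂ} (hf : Summable f) {D : ℤ → ℝ} (hD : Summable D)
    (hD0 : ∀ n, 0 ≤ D n) (hle : ∀ n : ℤ, n ≠ 0 → ‖f n‖ ≤ D n) :
    ‖(∑' n, f n) - f 0‖ ≤ (∑' n, D n) - D 0 := by
  have h1 := Summable.sum_add_tsum_compl (s := ({0} : Finset ℤ)) hf
  simp only [Finset.sum_singleton] at h1
  have h2 : (∑' n, f n) - f 0 = ∑' (x : ↑((({0} : Finset ℤ) : Set ℤ)ᶜ)), f x := by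
    rw [← h1]; ring
  rw [h2]
  have hDs : Summable (fun x : ↑((({0} : Finset ℤ) : Set ℤ)ᶜ) => D x) := hD.subtype _
  have hnorm : Summable (fun x : ↑((({0} : Finset ℤ) : Set ℤ)ᶜ) => ‖f x‖) := by
    apply Summable.of_nonneg_of_le (fun x => norm_nonneg _) _ hDs
    intro x
    exact hle x.1 (fun h => x.2 (Finset.mem_coe.mpr (Finset.mem_singleton.mpr h)))
  calc ‖∑' (x : ↑((({0} : Finset ℤ) : Set ℤ)ᶜ)), f x‖
      ≤ ∑' (x : ↑((({0} : Finset ℤ) : Set ℤ)ᶜ)), ‖f x‖ := norm_tsum_le_tsum_norm hnorm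
    _ ≤ ∑' (x : ↑((({0} : Finset ℤ) : Set ℤ)ᶜ)), D x := by
        apply Summable.tsum_le_tsum _ hnorm hDs
        intro x
        exact hle x.1 (fun h => x.2 (Finset.mem_coe.mpr (Finset.mem_singleton.mpr h)))
    _ = (∑' n, D n) - D 0 := by
        have h3 := Summable.sum_add_tsum_compl (s := ({0} : Finset ℤ)) hD
        simp only [Finset.sum_singleton] at h3
        linarith

/-- The dominating function `exp (-2|n|)`. -/
noncomputable def expAbs : ℤ → ℝ := fun n => Real.exp (-2 * |(n : ℝ)|)

lemma expAbs_nonneg (n : ℤ) : 0 ≤ expAbs n := (Real.exp_pos _).le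

/-- Summability of `exp (-2|n|)` over ℤ and numeric bound 3. -/
lemma summable_exp_neg_two_abs : Summable expAbs := by
  unfold expAbs
  apply Summable.of_nat_of_neg
  · apply Summable.congr (f := fun n : ℕ => Real.exp (-2) ^ n)
    · exact summable_geometric_of_lt_one (Real.exp_pos _).le
        (Real.exp_lt_one_iff.2 (by norm_num))
    · intro n
      rw [← Real.exp_nat_mul]
      congr 1
      rw [Int.cast_natCast, abs_of_nonneg (by positivity)]
      ring
  · apply Summable.congr (f := fun n : ℕ => Real.exp (-2) ^ n)
    · exact summable_geometric_of_lt_one (Real.exp_pos _).le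
        (Real.exp_lt_one_iff.2 (by norm_num))
    · intro n
      rw [← Real.exp_nat_mul]
      congr 1
      push_cast
      rw [abs_neg, abs_of_nonneg (Nat.cast_nonneg n)]
      ring

lemma tsum_exp_neg_two_abs_le : (∑' n : ℤ, expAbs n) ≤ 3 := by
  set q : ℝ := Real.exp (-2) with hq
  have hq0 : 0 < q := Real.exp_pos _
  have hq3 : q ≤ 1/3 := by
    have h3 : (3:ℝ) ≤ Real.exp 2 := by
      have := Real.add_one_le_exp (2:ℝ); linarith
    rw [hq, Real.exp_neg]
    calc (Real.exp 2)⁻¹ ≤ (3:ℝ)⁻¹ := by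
          apply inv_anti₀ (by norm_num) h3
    _ = 1/3 := by norm_num
  have hgeo : Summable (fun n : ℕ => q ^ n) :=
    summable_geometric_of_lt_one hq0.le (by linarith)
  have h1 : Summable (fun n : ℕ => expAbs n) := by
    unfold expAbs
    apply hgeo.congr
    intro n
    rw [← Real.exp_nat_mul, Int.cast_natCast, abs_of_nonneg (Nat.cast_nonneg n)]
    ring_nf
  have h2 : Summable (fun n : ℕ => expAbs (-(n+1))) := by
    unfold expAbs
    apply (hgeo.mul_left q).congr
    intro n
    rw [← Real.exp_nat_mul, ← Real.exp_add]
    congr 1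
    push_cast
    rw [abs_neg, abs_of_nonneg (by positivity)]
    ring
  rw [tsum_of_nat_of_neg_add_one h1 h2]
  have e1 : (∑' n : ℕ, expAbs n) = (1 - q)⁻¹ := by
    unfold expAbs
    rw [← tsum_geometric_of_lt_one hq0.le (by linarith)]
    apply tsum_congr
    intro n
    rw [← Real.exp_nat_mul, Int.cast_natCast, abs_of_nonneg (Nat.cast_nonneg n)]
    ring_nf
  have e2 : (∑' n : ℕ, expAbs (-(n+1))) = q * (1 - q)⁻¹ := by
    unfold expAbs
    rw [← tsum_geometric_of_lt_one hq0.le (by linarith), ← tsum_mul_left]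
    apply tsum_congr
    intro n
    rw [← Real.exp_nat_mul, ← Real.exp_add]
    congr 1
    push_cast
    rw [abs_neg, abs_of_nonneg (by positivity)]
    ring
  rw [e1, e2]
  have h13 : (1:ℝ) - q > 0 := by linarith
  have key : (1-q)⁻¹ + q*(1-q)⁻¹ = (1+q)/(1-q) := by field_simp
  rw [key, div_le_iff₀ h13]
  nlinarith

open Complex in
lemma poisson_gauss (b μ : ℝ) (hb : 0 < b) :
    |(∑' n : ℤ, Real.exp (-(b * ((n : ℝ) - μ) ^ 2))) - Real.sqrt (π / b)|
      ≤ Real.sqrt (π / b) * ((∑' n : ℤ, Real.exp (-(π ^ 2 / b * (n : ℝ) ^ 2))) - 1) := by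
  have hπ := Real.pi_pos
  set t : ℝ := π ^ 2 / b with ht
  have htpos : 0 < t := by positivity
  set h : ℤ → ℂ := fun n =>
    Complex.exp ((-(t * (n : ℝ) ^ 2) : ℝ) + (-(2 * π * μ * (n : ℝ)) : ℝ) * I) with hh
  have hnorm : ∀ n : ℤ, ‖h n‖ = Real.exp (-(t * (n : ℝ) ^ 2)) := by
    intro n
    rw [hh]
    simp only [Complex.norm_exp]
    norm_num [Complex.add_re, Complex.mul_I_re]
    left
    rw [show ((n : ℂ) ^ 2) = (((n : ℝ) ^ 2 : ℝ) : ℂ) by push_cast; ring, Complex.ofReal_re]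
  have hsummh : Summable h := by
    apply Summable.of_norm
    have := summable_gauss_int t 0 htpos
    apply this.congr
    intro n
    rw [hnorm n, sub_zero]
  have hsumD : Summable (fun n : ℤ => Real.exp (-(t * (n : ℝ) ^ 2))) := by
    have := summable_gauss_int t 0 htpos
    apply this.congr
    intro n
    rw [sub_zero]
  have hA : (0 : ℝ) < ((b / π : ℝ) : ℂ).re := by
    rw [Complex.ofReal_re]; positivity
  have key := Complex.tsum_exp_neg_quadratic hA ((b * μ / π : ℝ) : ℂ)
  -- rewrite the left side of `key`
  have hL : (∑' n : ℤ, Complex.exp (-(π : ℂ) * ((b / π : ℝ) : ℂ) * (n : ℂ) ^ 2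
        + 2 * (π : ℂ) * ((b * μ / π : ℝ) : ℂ) * (n : ℂ)))
      = Complex.exp ((b * μ ^ 2 : ℝ) : ℂ) *
        ∑' n : ℤ, ((Real.exp (-(b * ((n : ℝ) - μ) ^ 2)) : ℝ) : ℂ) := by
    rw [← tsum_mul_left]
    apply tsum_congr
    intro n
    rw [Complex.ofReal_exp, ← Complex.exp_add]
    congr 1
    have hπ' : (π : ℂ) ≠ 0 := Complex.ofReal_ne_zero.mpr hπ.ne'
    push_cast
    field_simp
    ring
  -- rewrite the right side of `key`
  have hR : (∑' n : ℤ, Complex.exp (-(π : ℂ) / ((b / π : ℝ) : ℂ)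
        * ((n : ℂ) + I * ((b * μ / π : ℝ) : ℂ)) ^ 2))
      = Complex.exp ((b * μ ^ 2 : ℝ) : ℂ) * ∑' n : ℤ, h n := by
    rw [← tsum_mul_left]
    apply tsum_congr
    intro n
    rw [hh, ← Complex.exp_add]
    congr 1
    have hπ' : (π : ℂ) ≠ 0 := Complex.ofReal_ne_zero.mpr hπ.ne'
    have hb' : ((b : ℝ) : ℂ) ≠ 0 := Complex.ofReal_ne_zero.mpr hb.ne'
    rw [ht]
    push_cast
    field_simp
    ring_nf
    rw [Complex.I_sq]
    ring
  rw [hL, hR] at key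
  rw [mul_comm (1 / ((b / π : ℝ) : ℂ) ^ (1 / 2 : ℂ)) _, mul_assoc] at key
  have key2 := mul_left_cancel₀ (Complex.exp_ne_zero _) key
  -- identify the square root factor
  have hsqrt : (1 : ℂ) / ((b / π : ℝ) : ℂ) ^ (1 / 2 : ℂ) = ((Real.sqrt (π / b) : ℝ) : ℂ) := by
    have hbπ : (0 : ℝ) ≤ b / π := by positivity
    rw [show (1 / 2 : ℂ) = ((1 / 2 : ℝ) : ℂ) by norm_num]
    rw [← Complex.ofReal_cpow hbπ]
    rw [← Real.sqrt_eq_rpow]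
    rw [show π / b = (b / π)⁻¹ by rw [inv_div]]
    rw [Real.sqrt_inv]
    rw [Complex.ofReal_inv, one_div]
  rw [hsqrt] at key2
  -- now do the norm estimate
  have h0 : h 0 = 1 := by
    rw [hh]
    norm_num
  have habs : ((|(∑' n : ℤ, Real.exp (-(b * ((n : ℝ) - μ) ^ 2))) - Real.sqrt (π / b)| : ℝ))
      = ‖((∑' n : ℤ, ((Real.exp (-(b * ((n : ℝ) - μ) ^ 2)) : ℝ) : ℂ))
          - ((Real.sqrt (π / b) : ℝ) : ℂ))‖ := by
    rw [← Complex.ofReal_tsum, ← Complex.ofReal_sub, Complex.norm_real]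
    exact (Real.norm_eq_abs _).symm
  rw [habs, key2]
  have : (∑' n, h n) * ((Real.sqrt (π / b) : ℝ) : ℂ) - ((Real.sqrt (π / b) : ℝ) : ℂ)
      = ((Real.sqrt (π / b) : ℝ) : ℂ) * ((∑' n, h n) - 1) := by ring
  rw [this, norm_mul, Complex.norm_real, Real.norm_eq_abs,
    _root_.abs_of_nonneg (Real.sqrt_nonneg _)]
  apply mul_le_mul_of_nonneg_left _ (Real.sqrt_nonneg _)
  have hfin := norm_tsum_sub_single hsummh hsumD (fun n => (Real.exp_pos _).le)
    (fun n _ => le_of_eq (hnorm n))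
  rw [h0] at hfin
  simpa using hfin



lemma arith2 (t x NN : ℝ) (htN : NN ≤ t) (hx : 1 ≤ |x|) (hx2 : |x| ^ 2 = x ^ 2)
    (hN : 1 ≤ NN) : -(t * x ^ 2) ≤ 2 + -NN + -2 * |x| := by
  nlinarith [sq_nonneg (|x| - 1), mul_le_mul_of_nonneg_right htN (sq_nonneg x)]

lemma arith1 (x NN : ℝ) (hN : 1 ≤ NN) (hx : x ≤ -1 ∨ NN + 1 ≤ x) :
    0 ≤ (9 * (x - NN / 3) ^ 2 - NN * (NN + 2 * |x|)) := by
  rcases hx with hx | hx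
  · rw [abs_of_nonpos (by linarith)]
    nlinarith
  · rw [abs_of_nonneg (by linarith)]
    nlinarith


theorem statement7 :
    ∃ C > (0 : ℝ), ∀ N : ℕ, 1 ≤ N →
      |(∑ n ∈ Finset.range (N + 1),
          3 / Real.sqrt (Real.pi * N) * Real.exp (-(9 / N) * ((n : ℝ) - N / 3) ^ 2)) - 1|
        ≤ C / N := by
  refine ⟨32, by norm_num, fun N hN => ?_⟩
  have hNR : (1 : ℝ) ≤ (N : ℝ) := by exact_mod_cast hN
  have hN0 : (0 : ℝ) < (N : ℝ) := by linarith
  have hπ := Real.pi_pos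
  have hπ3 : (3 : ℝ) < π := Real.pi_gt_three
  have hπ2 : (9 : ℝ) ≤ π ^ 2 := by nlinarith
  set b : ℝ := 9 / (N : ℝ) with hbdef
  have hb : 0 < b := by positivity
  set μ : ℝ := (N : ℝ) / 3 with hμdef
  set g : ℤ → ℝ := fun n => Real.exp (-(b * ((n : ℝ) - μ) ^ 2)) with hgdef
  set c : ℝ := 3 / Real.sqrt (π * N) with hcdef
  have hsπN : (1 : ℝ) ≤ Real.sqrt (π * N) := by
    rw [show (1:ℝ) = Real.sqrt 1 by simp]
    apply Real.sqrt_le_sqrt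
    nlinarith
  have hc0 : 0 < c := by positivity
  have hc3 : c ≤ 3 := by
    rw [hcdef]
    rw [div_le_iff₀ (by linarith)]
    nlinarith
  have hgsum : Summable g := summable_gauss_int b μ hb
  have hg0 : ∀ n, 0 ≤ g n := fun n => (Real.exp_pos _).le
  -- identify sqrt(π/b)
  have hsqrtb : Real.sqrt (π / b) = Real.sqrt (π * N) / 3 := by
    have h1 : π / b = (Real.sqrt (π * N) / 3) ^ 2 := by
      rw [div_pow, Real.sq_sqrt (by positivity)]
      rw [hbdef]
      field_simp
      norm_num
    rw [h1, Real.sqrt_sq (by positivity)]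
  have hc1 : c * Real.sqrt (π / b) = 1 := by
    rw [hsqrtb, hcdef]
    have : Real.sqrt (π * N) ≠ 0 := by linarith
    field_simp
  -- reindex the finite sum
  have hmap : Finset.Icc (0 : ℤ) (N : ℤ) =
      Finset.map ⟨fun n : ℕ => (n : ℤ), fun a b h => by exact Nat.cast_injective h⟩
        (Finset.range (N + 1)) := by
    ext m
    simp only [Finset.mem_Icc, Finset.mem_map, Finset.mem_range,
      Function.Embedding.coeFn_mk]
    dsimp only [DFunLike.coe]
    constructor
    · rintro ⟨h0, hm⟩
      exact ⟨m.toNat, by omega, by omega⟩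
    · rintro ⟨k, hk, rfl⟩
      constructor <;> omega
  have hfin : (∑ n ∈ Finset.range (N + 1),
        3 / Real.sqrt (π * N) * Real.exp (-(9 / N) * ((n : ℝ) - N / 3) ^ 2))
      = c * ∑ m ∈ Finset.Icc (0 : ℤ) (N : ℤ), g m := by
    rw [hmap, Finset.sum_map, Finset.mul_sum]
    apply Finset.sum_congr rfl
    intro n _
    simp only [Function.Embedding.coeFn_mk, hgdef]
    dsimp only [DFunLike.coe]
    rw [hcdef]
    congr 1
    congr 1
    push_cast
    rw [hbdef, hμdef]
    ring
  -- tail bound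
  have htail : ∑' n, g n - ∑ m ∈ Finset.Icc (0 : ℤ) (N : ℤ), g m
      ≤ Real.exp (-(N : ℝ)) * 3 := by
    have hDsum : Summable (fun n : ℤ => Real.exp (-(N : ℝ)) * expAbs n) :=
      summable_exp_neg_two_abs.mul_left _
    have hle : ∀ n ∉ Finset.Icc (0 : ℤ) (N : ℤ), g n ≤ Real.exp (-(N : ℝ)) * expAbs n := by
      intro n hn
      simp only [Finset.mem_Icc, not_and_or, not_le] at hn
      have key : b * ((n : ℝ) - μ) ^ 2 ≥ (N : ℝ) + 2 * |(n : ℝ)| := by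
        rw [hbdef, hμdef, ge_iff_le, ← sub_nonneg]
        have hx : 9 / (N:ℝ) * ((n:ℝ) - (N:ℝ)/3) ^ 2 - ((N:ℝ) + 2 * |(n:ℝ)|)
            = (9 * ((n:ℝ) - (N:ℝ)/3) ^ 2 - (N:ℝ) * ((N:ℝ) + 2 * |(n:ℝ)|)) / (N:ℝ) := by
          field_simp
        rw [hx]
        apply div_nonneg _ hN0.le
        apply arith1 _ _ hNR
        rcases hn with hn | hn
        · left
          have hn' : n ≤ -1 := by omega
          exact_mod_cast hn'
        · right
          have hn' : (N : ℤ) + 1 ≤ n := by omega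
          exact_mod_cast hn'
      show g n ≤ Real.exp (-(N : ℝ)) * expAbs n
      rw [hgdef]
      show Real.exp _ ≤ _
      unfold expAbs
      rw [← Real.exp_add]
      apply Real.exp_le_exp.2
      linarith
    have step := tsum_sub_sum_le (Finset.Icc (0 : ℤ) (N : ℤ)) hgsum hDsum hg0
      (fun n => mul_nonneg (Real.exp_pos _).le (expAbs_nonneg n)) hle
    refine step.trans ?_
    rw [tsum_mul_left]
    exact mul_le_mul_of_nonneg_left tsum_exp_neg_two_abs_le (Real.exp_pos _).le
  have htail0 := tsum_sub_sum_nonneg (Finset.Icc (0 : ℤ) (N : ℤ)) hgsum hg0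
  -- Poisson error bound
  have hP := poisson_gauss b μ hb
  have hE : (∑' n : ℤ, Real.exp (-(π ^ 2 / b * (n : ℝ) ^ 2))) - 1
      ≤ Real.exp (-(N : ℝ)) * (Real.exp 2 * 3) := by
    set t : ℝ := π ^ 2 / b with htdef
    have htN : (N : ℝ) ≤ t := by
      rw [htdef, hbdef]
      rw [div_div_eq_mul_div]
      rw [le_div_iff₀ (by norm_num)]
      nlinarith [mul_le_mul_of_nonneg_right hπ2 hN0.le]
    have ht0 : 0 < t := by linarith
    have hDsum2 : Summable (fun n : ℤ => (Real.exp 2 * Real.exp (-(N : ℝ))) * expAbs n) :=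
      summable_exp_neg_two_abs.mul_left _
    have hgsum2 : Summable (fun n : ℤ => Real.exp (-(t * (n : ℝ) ^ 2))) := by
      have := summable_gauss_int t 0 ht0
      apply this.congr
      intro n; rw [sub_zero]
    have hle2 : ∀ n ∉ ({0} : Finset ℤ), Real.exp (-(t * (n : ℝ) ^ 2))
        ≤ (Real.exp 2 * Real.exp (-(N : ℝ))) * expAbs n := by
      intro n hn
      have hn0 : n ≠ 0 := by simpa using hn
      have habs1 : (1 : ℝ) ≤ |(n : ℝ)| := by
        rw [← Int.cast_abs]
        exact_mod_cast Int.one_le_abs (by omega)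
      unfold expAbs
      rw [← Real.exp_add, ← Real.exp_add]
      apply Real.exp_le_exp.2
      have := arith2 t (n : ℝ) (N : ℝ) htN habs1 (sq_abs _) hNR
      linarith
    have step := tsum_sub_sum_le ({0} : Finset ℤ) hgsum2 hDsum2
      (fun n => (Real.exp_pos _).le)
      (fun n => mul_nonneg (mul_nonneg (Real.exp_pos _).le (Real.exp_pos _).le)
        (expAbs_nonneg n)) hle2
    · rw [Finset.sum_singleton] at step
      simp only [Int.cast_zero, ne_eq, OfNat.ofNat_ne_zero, not_false_eq_true,
        zero_pow, mul_zero, neg_zero, Real.exp_zero] at step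
      have heq : (∑' n : ℤ, Real.exp (-(t * (n : ℝ) ^ 2)))
          = ∑' n : ℤ, Real.exp (-(t * (n : ℝ) ^ 2)) := rfl
      refine le_trans ?_ (le_trans step ?_)
      · apply le_of_eq
        congr 1
      · rw [tsum_mul_left]
        calc Real.exp 2 * Real.exp (-(N : ℝ)) * ∑' n, expAbs n
            ≤ Real.exp 2 * Real.exp (-(N : ℝ)) * 3 := by
              apply mul_le_mul_of_nonneg_left tsum_exp_neg_two_abs_le (by positivity)
          _ = Real.exp (-(N : ℝ)) * (Real.exp 2 * 3) := by ring
  -- final combination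
  rw [hfin]
  have hexpN : Real.exp (-(N : ℝ)) ≤ 1 / (N : ℝ) := by
    rw [Real.exp_neg, one_div]
    apply inv_anti₀ hN0
    have := Real.add_one_le_exp (N : ℝ)
    linarith
  have hP' : |(∑' n, g n) - Real.sqrt (π / b)|
      ≤ Real.sqrt (π / b) * ((∑' n : ℤ, Real.exp (-(π ^ 2 / b * (n : ℝ) ^ 2))) - 1) := hP
  have hmain : |c * (∑ m ∈ Finset.Icc (0 : ℤ) (N : ℤ), g m) - 1|
      ≤ c * (Real.exp (-(N : ℝ)) * 3) + Real.exp (-(N : ℝ)) * (Real.exp 2 * 3) := by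
    have e1 : c * (∑ m ∈ Finset.Icc (0 : ℤ) (N : ℤ), g m) - 1
        = c * ((∑ m ∈ Finset.Icc (0 : ℤ) (N : ℤ), g m) - ∑' n, g n)
          + c * ((∑' n, g n) - Real.sqrt (π / b)) := by
      rw [← hc1]; ring
    rw [e1]
    refine (abs_add_le _ _).trans ?_
    rw [abs_mul, abs_mul, _root_.abs_of_pos hc0]
    apply add_le_add
    · have e2 : |(∑ m ∈ Finset.Icc (0 : ℤ) (N : ℤ), g m) - ∑' n, g n|
          = ∑' n, g n - ∑ m ∈ Finset.Icc (0 : ℤ) (N : ℤ), g m := by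
        rw [abs_sub_comm, _root_.abs_of_nonneg htail0]
      rw [e2]
      exact mul_le_mul_of_nonneg_left htail hc0.le
    · calc c * |(∑' n, g n) - Real.sqrt (π / b)|
          ≤ c * (Real.sqrt (π / b) * (Real.exp (-(N : ℝ)) * (Real.exp 2 * 3))) := by
            apply mul_le_mul_of_nonneg_left _ hc0.le
            exact hP'.trans (mul_le_mul_of_nonneg_left hE (Real.sqrt_nonneg _))
        _ = (c * Real.sqrt (π / b)) * (Real.exp (-(N : ℝ)) * (Real.exp 2 * 3)) := by ring
        _ = Real.exp (-(N : ℝ)) * (Real.exp 2 * 3) := by rw [hc1]; ring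
  refine hmain.trans ?_
  have he2 : Real.exp 2 ≤ 7.4 := by
    have he := Real.exp_one_lt_d9
    rw [show (2:ℝ) = 1 + 1 by norm_num, Real.exp_add]
    nlinarith [Real.exp_pos 1]
  have hexp0 := (Real.exp_pos (-(N : ℝ))).le
  calc c * (Real.exp (-(N : ℝ)) * 3) + Real.exp (-(N : ℝ)) * (Real.exp 2 * 3)
      ≤ 3 * (Real.exp (-(N : ℝ)) * 3) + Real.exp (-(N : ℝ)) * (7.4 * 3) := by
        apply add_le_add
        · exact mul_le_mul_of_nonneg_right hc3 (by positivity)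
        · apply mul_le_mul_of_nonneg_left _ hexp0
          nlinarith
    _ = Real.exp (-(N : ℝ)) * 31.2 := by ring
    _ ≤ (1 / (N : ℝ)) * 31.2 := by
        apply mul_le_mul_of_nonneg_right hexpN (by norm_num)
    _ ≤ 32 / (N : ℝ) := by
        rw [one_div, div_eq_mul_inv, mul_comm (32:ℝ)]
        apply mul_le_mul_of_nonneg_left (by norm_num) (by positivity)
end
end

section
/- There exist a constant $C > 0$ and $N_0$ such that for all $N \ge N_0$ and all integers $m, n$ with $1 \le m \le n$, $2m < \sqrt{6N\log N}$ and $|2n - 2N/3| < \sqrt{2N\log N}$, writing $\tilde n = n - N/3$, one has $P(D_N = 2m,\ T_N = 2n) = \frac{3^{3/2}}{2\pi N} \exp\Big\{ -\frac{3(3\tilde n^2 + m^2)}{N} - \frac{9(\tilde n^3 - \tilde n m^2)}{N^2} + r_{N,m,n} \Big\}$ where $|r_{N,m,n}| \le C\big(\frac{1}{N} + \frac{\tilde n^4 + m^4}{N^3}\big)$. -/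
open MeasureTheory ProbabilityTheory Filter

noncomputable section

open Real Finset Topology
open scoped ENNReal

set_option linter.unusedSectionVars false
set_option linter.unusedVariables false

section Aux

lemma log1p_lin {u : ℝ} (hu : |u| ≤ 1/2) : |Real.log (1+u) - u| ≤ 2 * u^2 := by
  have h1 : |(-u : ℝ)| < 1 := by rw [abs_neg]; linarith [abs_nonneg u]
  have := Real.abs_log_sub_add_sum_range_le h1 1
  simp only [Finset.sum_range_one, pow_one, Nat.cast_zero, zero_add, div_one] at this
  have h2 : (1 : ℝ) - -u = 1 + u := by ring
  rw [h2, abs_neg] at this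
  have h3 : |u| ^ 2 / (1 - |u|) ≤ 2 * u^2 := by
    rw [div_le_iff₀ (by linarith [abs_nonneg u] : (0:ℝ) < 1 - |u|)]
    have : |u|^2 = u^2 := sq_abs u
    nlinarith [abs_nonneg u, sq_nonneg u]
  calc |Real.log (1+u) - u| = |(-u) + Real.log (1+u)| := by
        rw [show -u + Real.log (1+u) = Real.log (1+u) - u by ring]
    _ ≤ |u|^2/(1-|u|) := this
    _ ≤ 2*u^2 := h3

lemma log1p_cube {u : ℝ} (hu : |u| ≤ 1/2) :
    |Real.log (1+u) - (u - u^2/2 + u^3/3)| ≤ 2 * u^4 := by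
  have h1 : |(-u : ℝ)| < 1 := by rw [abs_neg]; linarith [abs_nonneg u]
  have := Real.abs_log_sub_add_sum_range_le h1 3
  have hsum : (∑ i ∈ Finset.range 3, (-u) ^ (i + 1) / ((i:ℝ) + 1)) = -u + u^2/2 - u^3/3 := by
    rw [Finset.sum_range_succ, Finset.sum_range_succ, Finset.sum_range_one]
    norm_num; ring
  rw [hsum] at this
  have h2 : (1 : ℝ) - -u = 1 + u := by ring
  rw [h2, abs_neg] at this
  have h3 : |u| ^ 4 / (1 - |u|) ≤ 2 * u^4 := by
    rw [div_le_iff₀ (by linarith [abs_nonneg u] : (0:ℝ) < 1 - |u|)]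
    have h4 : |u|^4 = u^4 := by rw [← abs_pow, abs_of_nonneg (by positivity)]
    nlinarith [abs_nonneg u, pow_nonneg (abs_nonneg u) 4]
  calc |Real.log (1+u) - (u - u^2/2 + u^3/3)|
      = |(-u + u^2/2 - u^3/3) + Real.log (1+u)| := by
        rw [show -u + u^2/2 - u^3/3 + Real.log (1+u) = Real.log (1+u) - (u - u^2/2 + u^3/3) by ring]
    _ ≤ |u|^4/(1-|u|) := this
    _ ≤ 2*u^4 := h3

lemma mul_log1p_cube {u : ℝ} (hu : |u| ≤ 1/2) :
    |(1+u) * Real.log (1+u) - (u + u^2/2 - u^3/6)| ≤ 4 * u^4 := by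
  have h := log1p_cube hu
  have habs : |1 + u| ≤ 3/2 := by
    rw [abs_le] at hu ⊢; constructor <;> linarith [hu.1, hu.2]
  have key : (1+u) * Real.log (1+u) - (u + u^2/2 - u^3/6)
      = (1+u) * (Real.log (1+u) - (u - u^2/2 + u^3/3)) + u^4/3 := by ring
  rw [key]
  calc |(1+u) * (Real.log (1+u) - (u - u^2/2 + u^3/3)) + u^4/3|
      ≤ |1+u| * |Real.log (1+u) - (u - u^2/2 + u^3/3)| + u^4/3 := by
        refine (abs_add_le _ _).trans ?_
        rw [abs_mul, abs_of_nonneg (by positivity : (0:ℝ) ≤ u^4/3)]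
    _ ≤ (3/2) * (2*u^4) + u^4/3 := by gcongr
    _ ≤ 4 * u^4 := by nlinarith [pow_nonneg (abs_nonneg u) 4, sq_nonneg (u^2)]



noncomputable def Est (k : ℕ) : ℝ :=
  Real.log (Nat.factorial k) - ((k:ℝ) * Real.log k - k + Real.log (2*Real.pi*k)/2)

lemma Est_def (k : ℕ) : Est k =
    Real.log (Nat.factorial k) - ((k:ℝ) * Real.log k - k + Real.log (2*Real.pi*k)/2) := rfl

lemma Est_eq {k : ℕ} (hk : 1 ≤ k) :
    Est k = Real.log (Stirling.stirlingSeq k) - Real.log (Real.sqrt Real.pi) := by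
  have hk0 : (0:ℝ) < k := by exact_mod_cast hk
  rw [Stirling.log_stirlingSeq_formula, Est]
  rw [Real.log_div hk0.ne' (Real.exp_ne_zero 1), Real.log_exp,
    Real.log_sqrt Real.pi_pos.le,
    show (2*Real.pi*(k:ℝ)) = (2*(k:ℝ))*Real.pi by ring,
    Real.log_mul (by positivity) Real.pi_pos.ne']
  ring

lemma stirling_diff {j : ℕ} (hj : 1 ≤ j) :
    Real.log (Stirling.stirlingSeq j) - Real.log (Stirling.stirlingSeq (j+1))
      ≤ 1 / (4 * (j:ℝ)^2) := by
  obtain ⟨n, rfl⟩ : ∃ n, j = n + 1 := ⟨j - 1, by omega⟩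
  have := Stirling.log_stirlingSeq_sub_log_stirlingSeq_succ (n+1)
  push_cast at this ⊢
  convert this using 3

lemma stirling_tele {k : ℕ} (hk : 1 ≤ k) (M : ℕ) :
    Real.log (Stirling.stirlingSeq k) - Real.log (Stirling.stirlingSeq (k+M))
      ≤ 1/2 * (1/(2*(k:ℝ)-1) - 1/(2*((k:ℝ)+M)-1)) := by
  induction M with
  | zero => simp
  | succ M ih =>
    have hj : 1 ≤ k + M := le_add_right hk
    have hd := stirling_diff hj
    have hjr : (1:ℝ) ≤ (k:ℝ) + M := by exact_mod_cast hj
    set j : ℝ := (k:ℝ) + M with hjdef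
    have key : 1 / (4 * j^2) ≤ 1/2 * (1/(2*j-1) - 1/(2*(j+1)-1)) := by
      have h1 : (0:ℝ) < 2*j-1 := by simp only [hjdef]; push_cast; linarith
      have h2 : (0:ℝ) < 2*j+1 := by linarith
      have h3 : (2*j-1)*(2*j+1) ≤ 4*j^2 := by nlinarith
      have e2 : 2*(j+1)-1 = 2*j+1 := by ring
      rw [e2]
      calc 1/(4*j^2) ≤ 1/((2*j-1)*(2*j+1)) := by
            apply one_div_le_one_div_of_le (by positivity) h3
        _ = 1/2*(1/(2*j-1) - 1/(2*j+1)) := by field_simp; ring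
    have hcast : ((k + (M+1) : ℕ) : ℝ) = (k:ℝ) + M + 1 := by push_cast; ring
    have hcast2 : ((k + M : ℕ) : ℝ) = (k:ℝ) + M := by push_cast; ring
    calc Real.log (Stirling.stirlingSeq k) - Real.log (Stirling.stirlingSeq (k+(M+1)))
        = (Real.log (Stirling.stirlingSeq k) - Real.log (Stirling.stirlingSeq (k+M)))
          + (Real.log (Stirling.stirlingSeq (k+M)) - Real.log (Stirling.stirlingSeq (k+M+1))) := by
          rw [show k+(M+1) = k+M+1 by omega]; ring
      _ ≤ 1/2 * (1/(2*(k:ℝ)-1) - 1/(2*((k:ℝ)+M)-1)) + 1/(4*((k:ℝ)+M)^2) := by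
          refine add_le_add (by simpa [hcast2] using ih) ?_
          simpa [hcast2] using hd
      _ ≤ 1/2 * (1/(2*(k:ℝ)-1) - 1/(2*((k:ℝ)+(M+1:ℕ))-1)) := by
          push_cast
          rw [hjdef] at key
          ring_nf at key ⊢
          linarith [key]

lemma sqrtpi_le {k : ℕ} (hk : 1 ≤ k) : Real.sqrt Real.pi ≤ Stirling.stirlingSeq k := by
  obtain ⟨n, rfl⟩ := Nat.exists_eq_add_of_le hk
  have h1 : Filter.Tendsto (Stirling.stirlingSeq ∘ Nat.succ) atTop (𝓝 (Real.sqrt Real.pi)) :=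
    Stirling.tendsto_stirlingSeq_sqrt_pi.comp (tendsto_add_atTop_nat 1)
  have h2 := Stirling.stirlingSeq'_antitone.le_of_tendsto h1 n
  rw [add_comm]
  exact h2

lemma Est_nonneg {k : ℕ} (hk : 1 ≤ k) : 0 ≤ Est k := by
  rw [Est_eq hk, sub_nonneg]
  exact Real.log_le_log (Real.sqrt_pos.2 Real.pi_pos) (sqrtpi_le hk)

lemma Est_le {k : ℕ} (hk : 1 ≤ k) : Est k ≤ 1/(2*(k:ℝ)) := by
  have hk0 : (1:ℝ) ≤ (k:ℝ) := by exact_mod_cast hk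
  have hlim : Filter.Tendsto (fun M : ℕ => Real.log (Stirling.stirlingSeq k)
      - Real.log (Stirling.stirlingSeq (k+M))) atTop
      (𝓝 (Real.log (Stirling.stirlingSeq k) - Real.log (Real.sqrt Real.pi))) := by
    refine Filter.Tendsto.const_sub _ ?_
    have h2 : Filter.Tendsto (fun M : ℕ => Stirling.stirlingSeq (k+M)) atTop
        (𝓝 (Real.sqrt Real.pi)) := by
      have := Stirling.tendsto_stirlingSeq_sqrt_pi.comp (tendsto_add_atTop_nat k)
      simpa [add_comm, Function.comp_def] using this
    exact (Real.continuousAt_log (Real.sqrt_pos.2 Real.pi_pos).ne').tendsto.comp h2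
  have hbd : ∀ M : ℕ, Real.log (Stirling.stirlingSeq k)
      - Real.log (Stirling.stirlingSeq (k+M)) ≤ 1/2 * (1/(2*(k:ℝ)-1)) := by
    intro M
    refine (stirling_tele hk M).trans ?_
    have : (0:ℝ) < 2*((k:ℝ)+M)-1 := by
      have : (0:ℝ) ≤ (M:ℝ) := Nat.cast_nonneg M
      linarith
    have : (0:ℝ) ≤ 1/(2*((k:ℝ)+M)-1) := by positivity
    linarith
  have hle := le_of_tendsto hlim (Filter.Eventually.of_forall hbd)
  rw [Est_eq hk]
  refine hle.trans ?_
  rw [one_div_mul_one_div]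
  exact one_div_le_one_div_of_le (by linarith) (by linarith)


lemma term_cube {R δ : ℝ} (hR : 0 < R) (hδ : |δ| ≤ R/6) :
    |(R/3+δ) * Real.log (1+3*δ/R) - (δ + 3*δ^2/(2*R) - 3*δ^3/(2*R^2))| ≤ 108 * δ^4/R^3 := by
  set u : ℝ := 3*δ/R with hu
  have hub : |u| ≤ 1/2 := by
    rw [hu, abs_div, abs_of_pos hR, div_le_iff₀ hR, abs_mul]
    rw [abs_of_pos (by norm_num : (0:ℝ) < 3)]
    linarith
  have hkey : (R/3+δ) * Real.log (1+u) - (δ + 3*δ^2/(2*R) - 3*δ^3/(2*R^2))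
      = (R/3) * ((1+u) * Real.log (1+u) - (u + u^2/2 - u^3/6)) := by
    have h1 : R/3 + δ = (R/3) * (1+u) := by
      rw [hu]; field_simp
    rw [h1, hu]
    field_simp
    ring
  rw [hkey, abs_mul, abs_of_pos (by linarith : (0:ℝ) < R/3)]
  have := mul_log1p_cube hub
  calc R/3 * |(1+u) * Real.log (1+u) - (u + u^2/2 - u^3/6)| ≤ R/3 * (4*u^4) := by gcongr
    _ = 108 * δ^4/R^3 := by rw [hu]; field_simp; ring

lemma term_lin {R δ : ℝ} (hR : 0 < R) (hδ : |δ| ≤ R/6) :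
    |Real.log (1+3*δ/R) - 3*δ/R| ≤ 18 * δ^2/R^2 := by
  set u : ℝ := 3*δ/R with hu
  have hub : |u| ≤ 1/2 := by
    rw [hu, abs_div, abs_of_pos hR, div_le_iff₀ hR, abs_mul]
    rw [abs_of_pos (by norm_num : (0:ℝ) < 3)]
    linarith
  have := log1p_lin hub
  calc |Real.log (1+u) - u| ≤ 2*u^2 := this
    _ = 18 * δ^2/R^2 := by rw [hu]; field_simp; ring




def Vset (N m n : ℕ) : Finset (Fin N → ℝ) :=
  (Fintype.piFinset fun _ => ({-1, 0, 1} : Finset ℝ)).filter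
    (fun f => (∑ i, f i) = 2*(m:ℝ) ∧ (∑ i, (f i)^2) = 2*(n:ℝ))

lemma mem_tri {f : Fin N → ℝ} (hf : f ∈ Fintype.piFinset fun _ : Fin N => ({-1,0,1} : Finset ℝ))
    (i : Fin N) : f i = -1 ∨ f i = 0 ∨ f i = 1 := by
  have := Fintype.mem_piFinset.1 hf i
  simpa using this

lemma sum_eq_cards {N : ℕ} {f : Fin N → ℝ}
    (hf : f ∈ Fintype.piFinset fun _ : Fin N => ({-1,0,1} : Finset ℝ)) :
    (∑ i, f i) = ((univ.filter (fun i => f i = 1)).card : ℝ)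
        - ((univ.filter (fun i => f i = -1)).card : ℝ) ∧
    (∑ i, (f i)^2) = ((univ.filter (fun i => f i = 1)).card : ℝ)
        + ((univ.filter (fun i => f i = -1)).card : ℝ) := by
  have h1 : ∀ i, f i = (if f i = 1 then (1:ℝ) else 0) - (if f i = -1 then (1:ℝ) else 0) := by
    intro i; rcases mem_tri hf i with h|h|h <;> rw [h] <;> norm_num
  have h2 : ∀ i, (f i)^2 = (if f i = 1 then (1:ℝ) else 0) + (if f i = -1 then (1:ℝ) else 0) := by
    intro i; rcases mem_tri hf i with h|h|h <;> rw [h] <;> norm_num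
  constructor
  · rw [Finset.sum_congr rfl (fun i _ => h1 i), Finset.sum_sub_distrib]
    simp [Finset.sum_boole]
  · rw [Finset.sum_congr rfl (fun i _ => h2 i), Finset.sum_add_distrib]
    simp [Finset.sum_boole]

lemma filt_eq {N : ℕ} (P Q : Finset (Fin N)) (hd : ∀ i ∈ Q, i ∉ P) :
    (univ.filter (fun i => (if i ∈ P then (1:ℝ) else if i ∈ Q then -1 else 0) = 1) = P) ∧
    (univ.filter (fun i => (if i ∈ P then (1:ℝ) else if i ∈ Q then -1 else 0) = -1) = Q) := by
  constructor <;> ext i <;> simp only [Finset.mem_filter, Finset.mem_univ, true_and]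
  · by_cases h1 : i ∈ P
    · simp [h1]
    · by_cases h2 : i ∈ Q <;> simp [h1, h2] <;> norm_num
  · by_cases h1 : i ∈ P
    · simp only [h1, if_true]
      constructor
      · intro h; norm_num at h
      · intro h; exact absurd h1 (hd i h)
    · by_cases h2 : i ∈ Q <;> simp [h1, h2]

lemma card_Vset {N m n : ℕ} (hmn : m ≤ n) (h2n : 2*n ≤ N) :
    (Vset N m n).card = N.choose (n+m) * (N-(n+m)).choose (n-m) := by
  classical
  -- step 1 : rewrite the filter condition in terms of fiber cardinalities
  have hV : Vset N m n = (Fintype.piFinset fun _ : Fin N => ({-1,0,1} : Finset ℝ)).filter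
      (fun f => (univ.filter (fun i => f i = 1)).card = n + m ∧
        (univ.filter (fun i => f i = -1)).card = n - m) := by
    apply Finset.filter_congr
    intro f hf
    obtain ⟨hs1, hs2⟩ := sum_eq_cards hf
    set p : ℕ := (univ.filter (fun i => f i = 1)).card
    set q : ℕ := (univ.filter (fun i => f i = -1)).card
    constructor
    · rintro ⟨e1, e2⟩
      rw [hs1] at e1; rw [hs2] at e2
      have hp : (p:ℝ) = (n:ℝ) + m := by linarith
      have hq : (q:ℝ) = (n:ℝ) - m := by linarith
      constructor
      · exact_mod_cast hp
      · have : (q:ℝ) = ((n - m : ℕ) : ℝ) := by rw [hq]; push_cast [hmn]; ring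
        exact_mod_cast this
    · rintro ⟨e1, e2⟩
      rw [hs1, hs2, e1, e2]
      push_cast [hmn]
      constructor <;> ring
  rw [hV]
  -- step 2 : bijection with sigma of powersetCards
  set S : Finset (Σ _ : Finset (Fin N), Finset (Fin N)) :=
    (univ.powersetCard (n+m)).sigma (fun P => (univ \ P).powersetCard (n-m)) with hS
  have hcard : S.card = N.choose (n+m) * (N-(n+m)).choose (n-m) := by
    rw [hS, Finset.card_sigma]
    have : ∀ P ∈ (univ : Finset (Fin N)).powersetCard (n+m),
        ((univ \ P).powersetCard (n-m)).card = (N-(n+m)).choose (n-m) := by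
      intro P hP
      rw [Finset.mem_powersetCard] at hP
      rw [Finset.card_powersetCard, Finset.card_sdiff_of_subset hP.1, hP.2, Finset.card_univ,
        Fintype.card_fin]
    rw [Finset.sum_congr rfl this, Finset.sum_const, Finset.card_powersetCard,
      Finset.card_univ, Fintype.card_fin, smul_eq_mul]
  rw [← hcard]
  apply Finset.card_bij'
    (i := fun f _ => (⟨univ.filter (fun i => f i = 1), univ.filter (fun i => f i = -1)⟩ :
      Σ _ : Finset (Fin N), Finset (Fin N)))
    (j := fun pq _ => fun i => if i ∈ pq.1 then (1:ℝ) else if i ∈ pq.2 then -1 else 0)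
  · -- hi : maps into S
    intro f hf
    rw [Finset.mem_filter] at hf
    obtain ⟨hf0, e1, e2⟩ := hf
    rw [hS, Finset.mem_sigma]
    constructor
    · rw [Finset.mem_powersetCard]
      exact ⟨Finset.subset_univ _, e1⟩
    · rw [Finset.mem_powersetCard]
      refine ⟨?_, e2⟩
      intro i hi
      rw [Finset.mem_filter] at hi
      rw [Finset.mem_sdiff]
      refine ⟨Finset.mem_univ _, ?_⟩
      rw [Finset.mem_filter]
      rintro ⟨-, h1⟩
      rw [h1] at hi; norm_num at hi
  · -- hj : maps back into filtered set
    intro pq hpq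
    rw [hS, Finset.mem_sigma, Finset.mem_powersetCard, Finset.mem_powersetCard] at hpq
    obtain ⟨⟨-, hP⟩, hQsub, hQ⟩ := hpq
    have hdisj : ∀ i ∈ pq.2, i ∉ pq.1 := by
      intro i hi
      have := hQsub hi
      rw [Finset.mem_sdiff] at this
      exact this.2
    rw [Finset.mem_filter]
    refine ⟨?_, ?_, ?_⟩
    · rw [Fintype.mem_piFinset]
      intro i
      by_cases h1 : i ∈ pq.1 <;> by_cases h2 : i ∈ pq.2 <;> simp [h1, h2]
    · rw [(filt_eq pq.1 pq.2 hdisj).1, hP]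
    · rw [(filt_eq pq.1 pq.2 hdisj).2, hQ]
  · -- left inverse
    intro f hf
    rw [Finset.mem_filter] at hf
    funext i
    rcases mem_tri hf.1 i with h|h|h <;>
      · simp only [Finset.mem_filter, Finset.mem_univ, true_and, h]
        norm_num
  · -- right inverse
    intro pq hpq
    rw [hS, Finset.mem_sigma, Finset.mem_powersetCard, Finset.mem_powersetCard] at hpq
    obtain ⟨⟨-, hP⟩, hQsub, hQ⟩ := hpq
    have hdisj : ∀ i ∈ pq.2, i ∉ pq.1 := by
      intro i hi
      have := hQsub hi
      rw [Finset.mem_sdiff] at this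
      exact this.2
    exact Sigma.ext ((filt_eq pq.1 pq.2 hdisj).1)
      (heq_of_eq (filt_eq pq.1 pq.2 hdisj).2)





section PartA

variable {Ω : Type*} [MeasurableSpace Ω] {μ : Measure Ω} [IsProbabilityMeasure μ]
    {X : ℕ → Ω → ℝ}

lemma sing_meas (hdist : ∀ i, μ {ω | X i ω = -1} = 1/3 ∧ μ {ω | X i ω = 0} = 1/3 ∧
    μ {ω | X i ω = 1} = 1/3) (i : ℕ) {x : ℝ} (hx : x ∈ ({-1, 0, 1} : Set ℝ)) :
    μ (X i ⁻¹' {x}) = 1/3 := by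
  obtain ⟨h1, h2, h3⟩ := hdist i
  rcases hx with h | h | h <;> subst h
  · exact h1
  · exact h2
  · exact h3

lemma good_meas (hmeas : ∀ i, Measurable (X i))
    (hdist : ∀ i, μ {ω | X i ω = -1} = 1/3 ∧ μ {ω | X i ω = 0} = 1/3 ∧
      μ {ω | X i ω = 1} = 1/3) (i : ℕ) : μ (X i ⁻¹' {-1, 0, 1}) = 1 := by
  have heq : (X i ⁻¹' {-1, 0, 1} : Set Ω) = X i ⁻¹' {-1} ∪ (X i ⁻¹' {0} ∪ X i ⁻¹' {1}) := by
    ext ω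
    simp only [Set.mem_preimage, Set.mem_insert_iff, Set.mem_singleton_iff, Set.mem_union]
  have hd1 : Disjoint (X i ⁻¹' {0}) (X i ⁻¹' {1}) := by
    apply Set.disjoint_left.2; intro ω h0 h1
    simp only [Set.mem_preimage, Set.mem_singleton_iff] at h0 h1; norm_num [h0] at h1
  have hd2 : Disjoint (X i ⁻¹' {-1}) (X i ⁻¹' {0} ∪ X i ⁻¹' {1}) := by
    apply Set.disjoint_left.2; intro ω hm h01
    simp only [Set.mem_preimage, Set.mem_singleton_iff, Set.mem_union] at hm h01
    rcases h01 with h | h <;> norm_num [hm] at h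
  rw [heq, measure_union hd2 (((hmeas i) (measurableSet_singleton 0)).union
      ((hmeas i) (measurableSet_singleton 1))),
    measure_union hd1 ((hmeas i) (measurableSet_singleton 1))]
  have e1 : μ (X i ⁻¹' {-1}) = 1/3 := (hdist i).1
  have e2 : μ (X i ⁻¹' {0}) = 1/3 := (hdist i).2.1
  have e3 : μ (X i ⁻¹' {1}) = 1/3 := (hdist i).2.2
  rw [e1, e2, e3]
  rw [show (1:ℝ≥0∞)/3 + (1/3 + 1/3) = 3 * (1/3) by ring]
  rw [ENNReal.mul_div_cancel' (by norm_num) (by norm_num)]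

end PartA

section PartA2

variable {Ω : Type*} [MeasurableSpace Ω] {μ : Measure Ω} [IsProbabilityMeasure μ]
    {X : ℕ → Ω → ℝ}

def Bset (X : ℕ → Ω → ℝ) (N : ℕ) (f : Fin N → ℝ) : Set Ω :=
  ⋂ i : Fin N, X (i : ℕ) ⁻¹' {f i}

lemma Bset_meas_eq (hmeas : ∀ i, Measurable (X i))
    (hindep : iIndepFun X μ)
    (hdist : ∀ i, μ {ω | X i ω = -1} = 1/3 ∧ μ {ω | X i ω = 0} = 1/3 ∧
      μ {ω | X i ω = 1} = 1/3)
    (N : ℕ) (f : Fin N → ℝ) (hf : f ∈ Fintype.piFinset fun _ : Fin N => ({-1,0,1} : Finset ℝ)) :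
    μ (Bset X N f) = (1/3 : ℝ≥0∞)^N := by
  classical
  set s : ℕ → Set Ω := fun i => if h : i < N then X i ⁻¹' {f ⟨i, h⟩} else Set.univ with hs
  have hBs : Bset X N f = ⋂ i ∈ Finset.range N, s i := by
    ext ω
    simp only [Bset, Set.mem_iInter, Set.mem_preimage, Set.mem_singleton_iff,
      Finset.mem_range, hs]
    constructor
    · intro h i hi
      rw [dif_pos hi]
      exact h ⟨i, hi⟩
    · intro h i
      have := h i i.2
      rwa [dif_pos i.2] at this
  rw [hBs]
  rw [hindep.meas_biInter (S := Finset.range N) (s := s) ?_]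
  · have : ∀ i ∈ Finset.range N, μ (s i) = 1/3 := by
      intro i hi
      rw [Finset.mem_range] at hi
      rw [hs]
      simp only [dif_pos hi]
      apply sing_meas hdist
      have := Fintype.mem_piFinset.1 hf ⟨i, hi⟩
      simpa using this
    rw [Finset.prod_congr rfl this, Finset.prod_const, Finset.card_range]
  · intro i hi
    rw [Finset.mem_range] at hi
    exact ⟨{f ⟨i, hi⟩}, measurableSet_singleton _, by rw [hs]; simp [dif_pos hi]⟩

lemma prob_eq (hmeas : ∀ i, Measurable (X i))
    (hindep : iIndepFun X μ)
    (hdist : ∀ i, μ {ω | X i ω = -1} = 1/3 ∧ μ {ω | X i ω = 0} = 1/3 ∧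
      μ {ω | X i ω = 1} = 1/3)
    (N m n : ℕ) :
    μ {ω | DN X N ω = 2*(m:ℝ) ∧ TN X N ω = 2*(n:ℝ)}
      = (Vset N m n).card * (1/3 : ℝ≥0∞)^N := by
  classical
  set A : Set Ω := {ω | DN X N ω = 2*(m:ℝ) ∧ TN X N ω = 2*(n:ℝ)} with hA
  set G : Set Ω := ⋂ i ∈ Finset.range N, X i ⁻¹' ({-1, 0, 1} : Set ℝ) with hG
  have hGc : μ Gᶜ = 0 := by
    have : Gᶜ = ⋃ i ∈ Finset.range N, (X i ⁻¹' ({-1, 0, 1} : Set ℝ))ᶜ := by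
      rw [hG]
      simp [Set.compl_iInter]
    rw [this]
    refine le_antisymm ?_ (zero_le)
    refine (measure_biUnion_finset_le _ _).trans ?_
    have : ∀ i ∈ Finset.range N, μ (X i ⁻¹' ({-1, 0, 1} : Set ℝ))ᶜ = 0 := by
      intro i _
      rw [measure_compl (by
        exact (hmeas i) (by measurability)) (measure_ne_top μ _), good_meas hmeas hdist i]
      simp
    rw [Finset.sum_congr rfl this]
    simp
  have hAG : μ A = μ (A ∩ G) := by
    refine le_antisymm ?_ (measure_mono Set.inter_subset_left)
    calc μ A ≤ μ (A ∩ G) + μ (A \ G) := measure_le_inter_add_diff μ A G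
      _ ≤ μ (A ∩ G) + μ Gᶜ := by
          gcongr
          exact Set.diff_subset_compl A G
      _ = μ (A ∩ G) := by rw [hGc, add_zero]
  have hdecomp : A ∩ G = ⋃ f ∈ Vset N m n, Bset X N f := by
    ext ω
    simp only [Set.mem_iUnion, Set.mem_inter_iff, exists_prop]
    constructor
    · rintro ⟨⟨hD, hT⟩, hGω⟩
      have hmem : ∀ i : Fin N, X (i:ℕ) ω ∈ ({-1, 0, 1} : Set ℝ) := by
        intro i
        exact Set.mem_iInter₂.1 hGω (i:ℕ) (Finset.mem_range.2 i.2)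
      refine ⟨fun i : Fin N => X (i:ℕ) ω, ?_, ?_⟩
      · rw [Vset, Finset.mem_filter]
        refine ⟨Fintype.mem_piFinset.2 fun i => ?_, ?_, ?_⟩
        · have := hmem i; simpa using this
        · exact (Fin.sum_univ_eq_sum_range (fun i => X i ω) N).trans hD
        · exact (Fin.sum_univ_eq_sum_range (fun i => (X i ω)^2) N).trans hT
      · exact Set.mem_iInter.2 fun i => rfl
    · rintro ⟨f, hfV, hωB⟩
      have hx : ∀ i : Fin N, X (i:ℕ) ω = f i := fun i => Set.mem_iInter.1 hωB i
      rw [Vset, Finset.mem_filter] at hfV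
      obtain ⟨hfp, hs1, hs2⟩ := hfV
      refine ⟨⟨?_, ?_⟩, ?_⟩
      · show DN X N ω = 2*(m:ℝ)
        rw [DN, ← Fin.sum_univ_eq_sum_range (fun i => X i ω) N]
        rw [Finset.sum_congr rfl (fun i _ => hx i)]
        exact hs1
      · show TN X N ω = 2*(n:ℝ)
        rw [TN, ← Fin.sum_univ_eq_sum_range (fun i => (X i ω)^2) N]
        rw [Finset.sum_congr rfl (fun i _ => by rw [hx i])]
        exact hs2
      · refine Set.mem_iInter₂.2 fun i hi => ?_
        rw [Finset.mem_range] at hi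
        have := hx ⟨i, hi⟩
        simp only [Set.mem_preimage]
        rw [this]
        have := Fintype.mem_piFinset.1 hfp ⟨i, hi⟩
        simpa using this
  have hdisj : Set.PairwiseDisjoint ↑(Vset N m n) (Bset X N) := by
    intro f hf g hg hfg
    refine Set.disjoint_left.2 fun ω hωf hωg => hfg ?_
    funext i
    have h1 : X (i:ℕ) ω = f i := Set.mem_iInter.1 hωf i
    have h2 : X (i:ℕ) ω = g i := Set.mem_iInter.1 hωg i
    rw [← h1, h2]
  have hmeasB : ∀ f ∈ Vset N m n, MeasurableSet (Bset X N f) := by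
    intro f _
    exact MeasurableSet.iInter fun i => (hmeas (i:ℕ)) (measurableSet_singleton _)
  rw [hAG, hdecomp, measure_biUnion_finset hdisj hmeasB]
  have : ∀ f ∈ Vset N m n, μ (Bset X N f) = (1/3 : ℝ≥0∞)^N := by
    intro f hf
    rw [Vset, Finset.mem_filter] at hf
    exact Bset_meas_eq hmeas hindep hdist N f hf.1
  rw [Finset.sum_congr rfl this, Finset.sum_const, nsmul_eq_mul]

end PartA2


lemma quart_lemma (x y : ℝ) :
    108*(x+y)^4 + 108*(x-y)^4 + 108*((-2)*x)^4 ≤ 3456*(x^4+y^4) := by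
  nlinarith [sq_nonneg (x*y), sq_nonneg (x^2-y^2), sq_nonneg (x^2+y^2), sq_nonneg x, sq_nonneg y]

lemma amgm_lemma (x y R : ℝ) (hR : 0 < R) :
    (54*x^2+18*y^2)*R ≤ 54*R^2 + 54*(x^4+y^4) := by
  nlinarith [sq_nonneg (x^2-R), sq_nonneg (y^2-R), sq_nonneg y, mul_pos hR hR]

set_option maxHeartbeats 4000000 in
lemma partB (N m n : ℕ) (hN : 82944 ≤ N) (hmn : m ≤ n)
    (hmS : (2 * m : ℝ) < Real.sqrt (6 * N * Real.log N))
    (hnS : |(2 * n : ℝ) - 2 * N / 3| < Real.sqrt (2 * N * Real.log N)) :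
    2*n ≤ N ∧ ∃ r : ℝ, |r| ≤ 4000 * (1 / N + (((n : ℝ) - N / 3) ^ 4 + (m : ℝ) ^ 4) / N ^ 3) ∧
      ((N.choose (n+m) * (N-(n+m)).choose (n-m) : ℕ) : ℝ) * (1/3:ℝ)^N =
        3 ^ ((3 : ℝ) / 2) / (2 * Real.pi * N) *
          Real.exp (-(3 * (3 * ((n : ℝ) - N / 3) ^ 2 + (m : ℝ) ^ 2)) / N
            - 9 * (((n : ℝ) - N / 3) ^ 3 - ((n : ℝ) - N / 3) * (m : ℝ) ^ 2) / N ^ 2 + r) := by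
  have hN1 : 1 ≤ N := le_trans (by norm_num) hN
  set R : ℝ := (N:ℝ) with hRdef
  have hR : (0:ℝ) < R := by
    rw [hRdef]; exact_mod_cast Nat.lt_of_lt_of_le (by norm_num) hN
  have hR1 : (1:ℝ) ≤ R := by rw [hRdef]; exact_mod_cast hN1
  have hRbig : (82944:ℝ) ≤ R := by rw [hRdef]; exact_mod_cast hN
  set nt : ℝ := (n:ℝ) - R/3 with hntdef
  set mm : ℝ := (m:ℝ) with hmmdef
  have hmm0 : 0 ≤ mm := by rw [hmmdef]; positivity
  -- log bound
  have hsqR : (288:ℝ) ≤ Real.sqrt R := by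
    rw [show (288:ℝ) = Real.sqrt (288^2) from (Real.sqrt_sq (by norm_num)).symm]
    exact Real.sqrt_le_sqrt (by norm_num [hRbig])
  have hsq2 : Real.sqrt R * Real.sqrt R = R := Real.mul_self_sqrt hR.le
  have hlogR : Real.log R ≤ R/144 := by
    have h1 : Real.log R = 2 * Real.log (Real.sqrt R) := by
      rw [Real.log_sqrt hR.le]; ring
    have h2 : Real.log (Real.sqrt R) ≤ Real.sqrt R - 1 :=
      Real.log_le_sub_one_of_pos (by positivity)
    nlinarith
  have hlogR0 : 0 ≤ Real.log R := Real.log_nonneg hR1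
  set s : ℝ := Real.sqrt (R * Real.log R) with hsdef
  have hs0 : 0 ≤ s := Real.sqrt_nonneg _
  have hsle : s ≤ R/12 := by
    have h1 : R * Real.log R ≤ (R/12)^2 := by nlinarith
    have := Real.sqrt_le_sqrt h1
    rwa [Real.sqrt_sq (by positivity)] at this
  -- bounds on m and nt
  have hsqrt6 : Real.sqrt 6 ≤ 5/2 := by
    rw [show (5/2:ℝ) = Real.sqrt ((5/2)^2) from (Real.sqrt_sq (by norm_num)).symm]
    exact Real.sqrt_le_sqrt (by norm_num)
  have hsqrt2 : Real.sqrt 2 ≤ 3/2 := by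
    rw [show (3/2:ℝ) = Real.sqrt ((3/2)^2) from (Real.sqrt_sq (by norm_num)).symm]
    exact Real.sqrt_le_sqrt (by norm_num)
  have h6eq : Real.sqrt (6 * N * Real.log N) = Real.sqrt 6 * s := by
    rw [hsdef, ← hRdef, show 6 * R * Real.log R = 6 * (R * Real.log R) by ring,
      Real.sqrt_mul (by norm_num)]
  have h2eq : Real.sqrt (2 * N * Real.log N) = Real.sqrt 2 * s := by
    rw [hsdef, ← hRdef, show 2 * R * Real.log R = 2 * (R * Real.log R) by ring,
      Real.sqrt_mul (by norm_num)]
  have hmle : mm ≤ (5/4) * s := by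
    rw [h6eq] at hmS
    have : Real.sqrt 6 * s ≤ (5/2) * s := by gcongr
    rw [hmmdef]
    linarith
  have hntle : |nt| ≤ (3/4) * s := by
    rw [h2eq] at hnS
    have he : (2 * n : ℝ) - 2 * R / 3 = 2 * nt := by rw [hntdef]; ring
    rw [hRdef] at he  -- ?
    rw [he, abs_mul, abs_two] at hnS
    have : Real.sqrt 2 * s ≤ (3/2) * s := by gcongr
    linarith
  -- delta bounds
  have hδa : |nt + mm| ≤ R/6 := by
    have := abs_add_le nt mm
    rw [abs_of_nonneg hmm0] at this
    have h2 : |nt| + mm ≤ 2 * s := by linarith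
    linarith [this, hsle]
  have hδb : |nt - mm| ≤ R/6 := by
    have := abs_sub nt mm
    have h1 : |nt - mm| ≤ |nt| + |mm| := abs_sub nt mm
    rw [abs_of_nonneg hmm0] at h1
    linarith
  have hδc : |(-2) * nt| ≤ R/6 := by
    rw [abs_mul]
    have : |(-2:ℝ)| = 2 := by norm_num
    rw [this]
    linarith
  -- 2n ≤ N
  have h2nR : 2 * (n:ℝ) ≤ R := by
    have : (2:ℝ) * n = 2*R/3 + 2*nt := by rw [hntdef]; ring
    have habs := abs_le.1 hntle
    nlinarith
  have h2n : 2 * n ≤ N := by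
    have h' := h2nR
    rw [hRdef] at h'
    exact_mod_cast h'
  refine ⟨h2n, ?_⟩
  -- set up a b c
  set a : ℕ := n + m with hadef
  set b : ℕ := n - m with hbdef
  set c : ℕ := N - 2*n with hcdef
  have hca : (a:ℝ) = R/3 + (nt + mm) := by
    rw [hadef, hntdef, hmmdef]; push_cast; ring
  have hcb : (b:ℝ) = R/3 + (nt - mm) := by
    rw [hbdef, hntdef, hmmdef]; push_cast [hmn]; ring
  have hcc : (c:ℝ) = R/3 + (-2) * nt := by
    rw [hcdef, hntdef]; push_cast [h2n]; ring
  have haR : R/6 ≤ (a:ℝ) := by rw [hca]; linarith [(abs_le.1 hδa).1]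
  have hbR : R/6 ≤ (b:ℝ) := by rw [hcb]; linarith [(abs_le.1 hδb).1]
  have hcR : R/6 ≤ (c:ℝ) := by rw [hcc]; linarith [(abs_le.1 hδc).1]
  have ha1 : 1 ≤ a := by
    have h0 : 0 < a := Nat.cast_pos.mp (lt_of_lt_of_le (by positivity) haR)
    omega
  have hb1 : 1 ≤ b := by
    have h0 : 0 < b := Nat.cast_pos.mp (lt_of_lt_of_le (by positivity) hbR)
    omega
  have hc1 : 1 ≤ c := by
    have h0 : 0 < c := Nat.cast_pos.mp (lt_of_lt_of_le (by positivity) hcR)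
    omega
  have haN : a ≤ N := by omega
  have hbNa : b ≤ N - a := by omega
  -- the count as factorials
  set K : ℕ := N.choose a * (N-a).choose b with hKdef
  have hK1 : 1 ≤ K := Nat.one_le_iff_ne_zero.2 (Nat.mul_ne_zero
    (Nat.choose_pos haN).ne' (Nat.choose_pos hbNa).ne')
  have hKfactN : K * (Nat.factorial a * Nat.factorial b * Nat.factorial c) = Nat.factorial N := by
    have e2 : (N-a).choose b * Nat.factorial b * Nat.factorial (N-a-b) = Nat.factorial (N-a) :=
      Nat.choose_mul_factorial_mul_factorial hbNa
    have e1 : N.choose a * Nat.factorial a * Nat.factorial (N-a) = Nat.factorial N :=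
      Nat.choose_mul_factorial_mul_factorial haN
    calc K * (Nat.factorial a * Nat.factorial b * Nat.factorial c)
        = (N.choose a * Nat.factorial a) *
          ((N-a).choose b * Nat.factorial b * Nat.factorial (N-a-b)) := by
          rw [hKdef, show c = N-a-b by omega]; ring
      _ = N.choose a * Nat.factorial a * Nat.factorial (N-a) := by rw [e2]
      _ = Nat.factorial N := e1
  have hfapos : (0:ℝ) < Nat.factorial a := by exact_mod_cast (Nat.factorial_pos a)
  have hfbpos : (0:ℝ) < Nat.factorial b := by exact_mod_cast (Nat.factorial_pos b)
  have hfcpos : (0:ℝ) < Nat.factorial c := by exact_mod_cast (Nat.factorial_pos c)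
  have hKr : (K:ℝ) = (Nat.factorial N : ℝ) /
      ((Nat.factorial a : ℝ) * Nat.factorial b * Nat.factorial c) := by
    rw [eq_div_iff (by positivity)]
    exact_mod_cast hKfactN
  have hKpos : (0:ℝ) < K := by exact_mod_cast hK1
  set Pval : ℝ := (K:ℝ) * (1/3:ℝ)^N with hPdef
  have hPpos : 0 < Pval := by rw [hPdef]; positivity
  set c0 : ℝ := (3:ℝ) ^ ((3:ℝ)/2) / (2 * Real.pi * R) with hc0def
  have hc0pos : 0 < c0 := by
    rw [hc0def]
    have := Real.pi_pos
    positivity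
  set Q : ℝ := -(3 * (3 * nt^2 + mm^2)) / R - 9 * (nt^3 - nt * mm^2) / R^2 with hQdef
  refine ⟨Real.log Pval - Real.log c0 - Q, ?_, ?_⟩
  · -- the bound
    set r : ℝ := Real.log Pval - Real.log c0 - Q with hrdef
    -- log identities
    have hlogPval : Real.log Pval = Real.log (Nat.factorial N) - Real.log (Nat.factorial a)
        - Real.log (Nat.factorial b) - Real.log (Nat.factorial c) - R * Real.log 3 := by
      rw [hPdef, Real.log_mul hKpos.ne' (by positivity), hKr,
        Real.log_div (by positivity) (by positivity),
        Real.log_mul (by positivity) hfcpos.ne',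
        Real.log_mul hfapos.ne' hfbpos.ne',
        Real.log_pow, Real.log_div one_ne_zero (by norm_num), Real.log_one, hRdef]
      ring
    have hEN' : Real.log (Nat.factorial N) =
        R * Real.log R - R + Real.log (2*Real.pi*R)/2 + Est N := by
      rw [Est_def N, ← hRdef]; ring
    have hEa' : Real.log (Nat.factorial a) =
        (a:ℝ) * Real.log (a:ℝ) - (a:ℝ) + Real.log (2*Real.pi*(a:ℝ))/2 + Est a := by
      rw [Est_def a]; ring
    have hEb' : Real.log (Nat.factorial b) =
        (b:ℝ) * Real.log (b:ℝ) - (b:ℝ) + Real.log (2*Real.pi*(b:ℝ))/2 + Est b := by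
      rw [Est_def b]; ring
    have hEc' : Real.log (Nat.factorial c) =
        (c:ℝ) * Real.log (c:ℝ) - (c:ℝ) + Real.log (2*Real.pi*(c:ℝ))/2 + Est c := by
      rw [Est_def c]; ring
    have hapos : (0:ℝ) < (a:ℝ) := lt_of_lt_of_le (by positivity) haR
    have hbpos : (0:ℝ) < (b:ℝ) := lt_of_lt_of_le (by positivity) hbR
    have hcpos : (0:ℝ) < (c:ℝ) := lt_of_lt_of_le (by positivity) hcR
    have hpi := Real.pi_pos
    have h2pa : Real.log (2*Real.pi*(a:ℝ)) = Real.log 2 + Real.log Real.pi + Real.log (a:ℝ) := by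
      rw [Real.log_mul (by positivity) hapos.ne', Real.log_mul (by norm_num) hpi.ne']
    have h2pb : Real.log (2*Real.pi*(b:ℝ)) = Real.log 2 + Real.log Real.pi + Real.log (b:ℝ) := by
      rw [Real.log_mul (by positivity) hbpos.ne', Real.log_mul (by norm_num) hpi.ne']
    have h2pc : Real.log (2*Real.pi*(c:ℝ)) = Real.log 2 + Real.log Real.pi + Real.log (c:ℝ) := by
      rw [Real.log_mul (by positivity) hcpos.ne', Real.log_mul (by norm_num) hpi.ne']
    have h2pN : Real.log (2*Real.pi*R) = Real.log 2 + Real.log Real.pi + Real.log R := by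
      rw [Real.log_mul (by positivity) hR.ne', Real.log_mul (by norm_num) hpi.ne']
    have hlc0 : Real.log c0 = (3/2) * Real.log 3
        - (Real.log 2 + Real.log Real.pi + Real.log R) := by
      rw [hc0def, Real.log_div (by positivity) (by positivity),
        Real.log_rpow (by norm_num), h2pN]
    -- L identities
    set La : ℝ := Real.log (1 + 3*(nt+mm)/R) with hLadef
    set Lb : ℝ := Real.log (1 + 3*(nt-mm)/R) with hLbdef
    set Lc : ℝ := Real.log (1 + 3*((-2)*nt)/R) with hLcdef
    have hLa : La = Real.log 3 + Real.log (a:ℝ) - Real.log R := by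
      rw [hLadef, show 1 + 3*(nt+mm)/R = 3*(a:ℝ)/R by rw [hca]; field_simp,
        Real.log_div (by positivity) hR.ne', Real.log_mul (by norm_num) hapos.ne']
    have hLb : Lb = Real.log 3 + Real.log (b:ℝ) - Real.log R := by
      rw [hLbdef, show 1 + 3*(nt-mm)/R = 3*(b:ℝ)/R by rw [hcb]; field_simp,
        Real.log_div (by positivity) hR.ne', Real.log_mul (by norm_num) hbpos.ne']
    have hLc : Lc = Real.log 3 + Real.log (c:ℝ) - Real.log R := by
      rw [hLcdef, show 1 + 3*((-2)*nt)/R = 3*(c:ℝ)/R by rw [hcc]; field_simp,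
        Real.log_div (by positivity) hR.ne', Real.log_mul (by norm_num) hcpos.ne']
    set A1 : ℝ := -(((R/3+(nt+mm))*La + (R/3+(nt-mm))*Lb + (R/3+(-2)*nt)*Lc)) - Q with hA1def
    set A2 : ℝ := -(La + Lb + Lc)/2 with hA2def
    set A3 : ℝ := Est N - Est a - Est b - Est c with hA3def
    have hsplit : r = A1 + A2 + A3 := by
      rw [hrdef, hlogPval, hEN', hEa', hEb', hEc', h2pa, h2pb, h2pc, h2pN, hlc0,
        hA1def, hA2def, hA3def, hLa, hLb, hLc, hca, hcb, hcc, hQdef]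
      have hsum : (R/3 + (nt+mm)) + (R/3 + (nt-mm)) + (R/3 + (-2)*nt) = R := by ring
      ring
    -- bound A1
    have t1 := term_cube hR hδa
    have t2 := term_cube hR hδb
    have t3 := term_cube hR hδc
    have hA1eq : A1 = -(((R/3+(nt+mm))*La - ((nt+mm) + 3*(nt+mm)^2/(2*R) - 3*(nt+mm)^3/(2*R^2)))
        + ((R/3+(nt-mm))*Lb - ((nt-mm) + 3*(nt-mm)^2/(2*R) - 3*(nt-mm)^3/(2*R^2)))
        + ((R/3+(-2)*nt)*Lc - (((-2)*nt) + 3*((-2)*nt)^2/(2*R) - 3*((-2)*nt)^3/(2*R^2)))) := by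
      rw [hA1def, hQdef]
      ring
    have hquart : 108*(nt+mm)^4 + 108*(nt-mm)^4 + 108*((-2)*nt)^4 ≤ 3456*(nt^4 + mm^4) :=
      quart_lemma nt mm
    have hA1bd : |A1| ≤ 3456*(nt^4 + mm^4)/R^3 := by
      rw [hA1eq, abs_neg]
      calc |((R/3+(nt+mm))*La - ((nt+mm) + 3*(nt+mm)^2/(2*R) - 3*(nt+mm)^3/(2*R^2)))
            + ((R/3+(nt-mm))*Lb - ((nt-mm) + 3*(nt-mm)^2/(2*R) - 3*(nt-mm)^3/(2*R^2)))
            + ((R/3+(-2)*nt)*Lc - (((-2)*nt) + 3*((-2)*nt)^2/(2*R) - 3*((-2)*nt)^3/(2*R^2)))|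
          ≤ 108*(nt+mm)^4/R^3 + 108*(nt-mm)^4/R^3 + 108*((-2)*nt)^4/R^3 := by
            refine (abs_add_le _ _).trans ?_
            refine add_le_add ((abs_add_le _ _).trans (add_le_add t1 t2)) t3
        _ ≤ 3456*(nt^4 + mm^4)/R^3 := by
            rw [← add_div, ← add_div]
            exact (div_le_div_iff_of_pos_right (by positivity)).mpr hquart
    -- bound A2
    have l1 := term_lin hR hδa
    have l2 := term_lin hR hδb
    have l3 := term_lin hR hδc
    have hA2eq : A2 = -((La - 3*(nt+mm)/R) + (Lb - 3*(nt-mm)/R) + (Lc - 3*((-2)*nt)/R))/2 := by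
      rw [hA2def]
      field_simp
      ring
    have hA2bd : |A2| ≤ 54 * (1/R + (nt^4+mm^4)/R^3) := by
      have step1 : |A2| ≤ (18*(nt+mm)^2/R^2 + 18*(nt-mm)^2/R^2 + 18*((-2)*nt)^2/R^2)/2 := by
        rw [hA2eq, abs_div, abs_neg]
        rw [abs_of_pos (by norm_num : (0:ℝ) < 2)]
        gcongr
        refine (abs_add_le _ _).trans ?_
        refine add_le_add ((abs_add_le _ _).trans (add_le_add l1 l2)) l3
      have step2 : (18*(nt+mm)^2/R^2 + 18*(nt-mm)^2/R^2 + 18*((-2)*nt)^2/R^2)/2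
          ≤ 54 * (1/R + (nt^4+mm^4)/R^3) := by
        have e1 : (18*(nt+mm)^2/R^2 + 18*(nt-mm)^2/R^2 + 18*((-2)*nt)^2/R^2)/2
            = ((54*nt^2+18*mm^2)*R)/R^3 := by
          field_simp
          ring
        have e2 : (54:ℝ) * (1/R + (nt^4+mm^4)/R^3) = (54*R^2 + 54*(nt^4+mm^4))/R^3 := by
          field_simp
        rw [e1, e2]
        refine (div_le_div_iff_of_pos_right (by positivity)).mpr ?_
        exact amgm_lemma nt mm R hR
      linarith
    -- bound A3
    have hA3bd : |A3| ≤ 10/R := by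
      have eN0 := Est_nonneg hN1
      have ea0 := Est_nonneg ha1
      have eb0 := Est_nonneg hb1
      have ec0 := Est_nonneg hc1
      have eNl : Est N ≤ 1/(2*R) := by
        have := Est_le hN1
        rwa [← hRdef] at this
      have eal : Est a ≤ 3/R := by
        refine (Est_le ha1).trans ?_
        rw [div_le_div_iff₀ (by positivity) hR]
        linarith
      have ebl : Est b ≤ 3/R := by
        refine (Est_le hb1).trans ?_
        rw [div_le_div_iff₀ (by positivity) hR]
        linarith
      have ecl : Est c ≤ 3/R := by
        refine (Est_le hc1).trans ?_
        rw [div_le_div_iff₀ (by positivity) hR]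
        linarith
      have d1 : (3:ℝ)/R = 3*(1/R) := by ring
      have d2 : (10:ℝ)/R = 10*(1/R) := by ring
      have d3 : 1/(2*R) = (1/2)*(1/R) := by ring
      have d4 : (0:ℝ) ≤ 1/R := by positivity
      rw [hA3def, abs_le]
      constructor
      · linarith
      · linarith
    -- combine
    have hq0 : 0 ≤ (nt^4+mm^4)/R^3 := by positivity
    have hr0 : 0 ≤ 1/R := by positivity
    have habs : |r| ≤ |A1| + |A2| + |A3| := by
      rw [hsplit]
      refine (abs_add_le _ _).trans ?_
      exact add_le_add (abs_add_le _ _) le_rfl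
    have htot : |r| ≤ 3456*(nt^4+mm^4)/R^3 + 54*(1/R + (nt^4+mm^4)/R^3) + 10/R := by
      linarith
    have hconv : 3456*(nt^4+mm^4)/R^3 = 3456*((nt^4+mm^4)/R^3) := by ring
    have hd10 : (10:ℝ)/R = 10*(1/R) := by ring
    calc |r| ≤ 3456*(nt^4+mm^4)/R^3 + 54*(1/R + (nt^4+mm^4)/R^3) + 10/R := htot
      _ ≤ 4000 * (1/R + (nt^4+mm^4)/R^3) := by linarith [hconv, hd10]
  · -- the equality
    show Pval = c0 * Real.exp (Q + (Real.log Pval - Real.log c0 - Q))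
    rw [show Q + (Real.log Pval - Real.log c0 - Q) = Real.log Pval - Real.log c0 by ring,
      Real.exp_sub, Real.exp_log hPpos, Real.exp_log hc0pos, mul_comm c0,
      div_mul_cancel₀ _ hc0pos.ne']

end Aux

theorem statement12 {Ω : Type*} [MeasurableSpace Ω] (μ : Measure Ω) [IsProbabilityMeasure μ]
    (X : ℕ → Ω → ℝ) (hmeas : ∀ i, Measurable (X i))
    (hindep : iIndepFun X μ)
    (hdist : ∀ i, μ {ω | X i ω = -1} = 1/3 ∧ μ {ω | X i ω = 0} = 1/3 ∧ μ {ω | X i ω = 1} = 1/3) :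
    ∃ C > (0 : ℝ), ∃ N₀ : ℕ, ∀ N : ℕ, N₀ ≤ N → ∀ m n : ℕ, 1 ≤ m → m ≤ n →
      (2 * m : ℝ) < Real.sqrt (6 * N * Real.log N) →
      |(2 * n : ℝ) - 2 * N / 3| < Real.sqrt (2 * N * Real.log N) →
      ∃ r : ℝ, |r| ≤ C * (1 / N + (((n : ℝ) - N / 3) ^ 4 + (m : ℝ) ^ 4) / N ^ 3) ∧
        (μ {ω | DN X N ω = 2 * (m : ℝ) ∧ TN X N ω = 2 * (n : ℝ)}).toReal =
          3 ^ ((3 : ℝ) / 2) / (2 * Real.pi * N) *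
            Real.exp (-(3 * (3 * ((n : ℝ) - N / 3) ^ 2 + (m : ℝ) ^ 2)) / N
              - 9 * (((n : ℝ) - N / 3) ^ 3 - ((n : ℝ) - N / 3) * (m : ℝ) ^ 2) / N ^ 2 + r) := by
  refine ⟨4000, by norm_num, 82944, ?_⟩
  intro N hN m n hm1 hmn hmS hnS
  obtain ⟨h2n, r, hrb, heq⟩ := partB N m n hN hmn hmS hnS
  refine ⟨r, hrb, ?_⟩
  rw [prob_eq hmeas hindep hdist N m n, card_Vset hmn h2n, ← heq]
  rw [ENNReal.toReal_mul, ENNReal.toReal_pow, ENNReal.toReal_natCast, ENNReal.toReal_div]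
  norm_num
end
end
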